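/- arXiv:2301.02599 — 14 statements merged into one kernel-verified Lean document; each statement's English description precedes it below -/
import Mathlib

section
/- For every real x > 0 with x ≠ 1 and every real p with 0 < p < 1, the Wigner–Yanase–Dyson function satisfies W_p(x,1) ≤ p(1-p)(√x - 1)² + L(x,1). -/
open Real

private lemma aux_sinh_le_mul_cosh {x : ℝ} (hx : 0 ≤ x) : Real.sinh x ≤ x * Real.cosh x := by
  have hmono : MonotoneOn (fun y : ℝ => y * Real.cosh y - Real.sinh y) (Set.Ici 0) := by
    apply monotoneOn_of_deriv_nonneg (convex_Ici 0)
    · fun_prop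
    · intro y hy
      exact (((hasDerivAt_id y).mul (Real.hasDerivAt_cosh y)).sub
        (Real.hasDerivAt_sinh y)).differentiableAt.differentiableWithinAt
    · intro y hy
      rw [interior_Ici, Set.mem_Ioi] at hy
      have hd : HasDerivAt (fun y : ℝ => y * Real.cosh y - Real.sinh y)
          (1 * Real.cosh y + y * Real.sinh y - Real.cosh y) y :=
        ((hasDerivAt_id y).mul (Real.hasDerivAt_cosh y)).sub (Real.hasDerivAt_sinh y)
      rw [hd.deriv]
      have := Real.sinh_pos_iff.2 hy
      nlinarith
  have h0 := hmono (Set.self_mem_Ici) (Set.mem_Ici.2 hx) hx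
  simp only [Real.cosh_zero, Real.sinh_zero, mul_one, zero_mul, sub_zero] at h0
  linarith

private lemma aux_sinh_div_mono {y z : ℝ} (hy : 0 ≤ y) (hyz : y ≤ z) :
    z * Real.sinh y ≤ y * Real.sinh z := by
  have hmono : MonotoneOn (fun w : ℝ => y * Real.sinh w - w * Real.sinh y) (Set.Ici y) := by
    apply monotoneOn_of_deriv_nonneg (convex_Ici y)
    · fun_prop
    · intro w hw
      exact (((Real.hasDerivAt_sinh w).const_mul y).sub
        ((hasDerivAt_id w).mul_const (Real.sinh y))).differentiableAt.differentiableWithinAt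
    · intro w hw
      rw [interior_Ici, Set.mem_Ioi] at hw
      have hd : HasDerivAt (fun w : ℝ => y * Real.sinh w - w * Real.sinh y)
          (y * Real.cosh w - 1 * Real.sinh y) w :=
        ((Real.hasDerivAt_sinh w).const_mul y).sub ((hasDerivAt_id w).mul_const (Real.sinh y))
      rw [hd.deriv]
      have h1 : Real.sinh y ≤ y * Real.cosh y := aux_sinh_le_mul_cosh hy
      have h2 : Real.cosh y ≤ Real.cosh w := by
        rw [Real.cosh_le_cosh, abs_of_nonneg hy, abs_of_nonneg (by linarith : (0:ℝ) ≤ w)]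
        linarith
      nlinarith
  have h0 := hmono (Set.self_mem_Ici) (Set.mem_Ici.2 hyz) hyz
  simp only [mul_comm] at h0
  nlinarith [h0]

private lemma aux_lemA {d m : ℝ} (hd : 0 ≤ d) (hdm : d ≤ m) :
    d * Real.cosh d * Real.sinh m ≤ m * Real.cosh m * Real.sinh d := by
  have h := aux_sinh_div_mono (y := m - d) (z := m + d) (by linarith) (by linarith)
  rw [Real.sinh_add, Real.sinh_sub] at h
  nlinarith [h]

private lemma aux_key {m d : ℝ} (hm : 0 < m) (hd : 0 ≤ d) (hdm : d ≤ m) :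
    (m ^ 2 - d ^ 2) * Real.sinh m * Real.cosh d ^ 2 ≤
      m * Real.cosh m * (Real.sinh m ^ 2 - Real.sinh d ^ 2) := by
  set G : ℝ → ℝ := fun y =>
    m * Real.cosh m * (Real.sinh m ^ 2 - Real.sinh y ^ 2) -
      (m ^ 2 - y ^ 2) * Real.sinh m * Real.cosh y ^ 2 with hGdef
  have hder : ∀ y : ℝ, HasDerivAt G
      (2 * Real.cosh y * (y * Real.sinh m * Real.cosh y -
        Real.sinh y * (m * Real.cosh m + (m ^ 2 - y ^ 2) * Real.sinh m))) y := by
    intro y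
    have h1 : HasDerivAt (fun w : ℝ => Real.sinh w ^ 2) (2 * Real.sinh y * Real.cosh y) y := by
      have : HasDerivAt (fun w : ℝ => Real.sinh w ^ 2) _ y := (Real.hasDerivAt_sinh y).pow 2
      simpa [mul_comm, mul_assoc] using this
    have h2 : HasDerivAt (fun w : ℝ => Real.cosh w ^ 2) (2 * Real.cosh y * Real.sinh y) y := by
      have : HasDerivAt (fun w : ℝ => Real.cosh w ^ 2) _ y := (Real.hasDerivAt_cosh y).pow 2
      simpa [mul_comm, mul_assoc] using this
    have h3 : HasDerivAt (fun w : ℝ => m ^ 2 - w ^ 2) (-(2 * y)) y := by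
      have := (hasDerivAt_pow 2 y).const_sub (m ^ 2)
      simpa using this
    have hA : HasDerivAt (fun w : ℝ => m * Real.cosh m * (Real.sinh m ^ 2 - Real.sinh w ^ 2))
        (m * Real.cosh m * (0 - 2 * Real.sinh y * Real.cosh y)) y :=
      ((hasDerivAt_const y (Real.sinh m ^ 2)).sub h1).const_mul _
    have hB : HasDerivAt (fun w : ℝ => (m ^ 2 - w ^ 2) * Real.sinh m * Real.cosh w ^ 2)
        ((-(2 * y)) * Real.sinh m * Real.cosh y ^ 2 +
          ((m ^ 2 - y ^ 2) * Real.sinh m) * (2 * Real.cosh y * Real.sinh y)) y :=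
      (h3.mul_const (Real.sinh m)).mul h2
    have := hA.sub hB
    refine this.congr_deriv ?_
    ring
  have hanti : AntitoneOn G (Set.Icc 0 m) := by
    apply antitoneOn_of_deriv_nonpos (convex_Icc 0 m)
    · fun_prop
    · intro y hy
      exact (hder y).differentiableAt.differentiableWithinAt
    · intro y hy
      rw [interior_Icc] at hy
      rw [(hder y).deriv]
      have hy0 : 0 < y := hy.1
      have hym : y < m := hy.2
      have hA := aux_lemA hy0.le hym.le
      have hsy : 0 < Real.sinh y := Real.sinh_pos_iff.2 hy0
      have hsm : 0 < Real.sinh m := Real.sinh_pos_iff.2 hm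
      have hcy : 0 < Real.cosh y := Real.cosh_pos y
      nlinarith [mul_nonneg (mul_nonneg hsy.le hsm.le)
        (by nlinarith : (0:ℝ) ≤ m ^ 2 - y ^ 2)]
  have hmem1 : d ∈ Set.Icc (0:ℝ) m := ⟨hd, hdm⟩
  have hmem2 : m ∈ Set.Icc (0:ℝ) m := ⟨hm.le, le_refl m⟩
  have h := hanti hmem1 hmem2 hdm
  have hGm : G m = 0 := by simp [hGdef]
  rw [hGm] at h
  simp only [hGdef] at h
  linarith

private lemma aux_bridge {m D : ℝ} (hm : 0 < m) (hDm : |D| ≤ m) :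
    (m ^ 2 - D ^ 2) * Real.sinh m ^ 2 * Real.cosh m ^ 2 ≤
      ((m ^ 2 - D ^ 2) * Real.sinh m ^ 2 + m * Real.sinh m * Real.cosh m) *
        (Real.sinh m ^ 2 - Real.sinh D ^ 2) := by
  have hkey := aux_key hm (abs_nonneg D) hDm
  rw [Real.cosh_abs, sq_abs] at hkey
  have hsD2 : Real.sinh |D| ^ 2 = Real.sinh D ^ 2 := by
    rcases abs_cases D with ⟨h, _⟩ | ⟨h, _⟩ <;> rw [h] <;> simp [Real.sinh_neg, neg_sq]
  rw [hsD2] at hkey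
  have hS0 : 0 < Real.sinh m := Real.sinh_pos_iff.2 hm
  have kk : (m ^ 2 - D ^ 2) * Real.sinh m ^ 2 * Real.cosh D ^ 2 ≤
      m * Real.sinh m * Real.cosh m * (Real.sinh m ^ 2 - Real.sinh D ^ 2) := by
    nlinarith [hkey, hS0]
  have heq : ((m ^ 2 - D ^ 2) * Real.sinh m ^ 2 + m * Real.sinh m * Real.cosh m) *
        (Real.sinh m ^ 2 - Real.sinh D ^ 2) -
      (m ^ 2 - D ^ 2) * Real.sinh m ^ 2 * Real.cosh m ^ 2 =
      m * Real.sinh m * Real.cosh m * (Real.sinh m ^ 2 - Real.sinh D ^ 2) -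
        (m ^ 2 - D ^ 2) * Real.sinh m ^ 2 * Real.cosh D ^ 2 := by
    linear_combination ((m ^ 2 - D ^ 2) * Real.sinh m ^ 2) * Real.cosh_sq D -
      ((m ^ 2 - D ^ 2) * Real.sinh m ^ 2) * Real.cosh_sq m
  linarith [kk, heq]

private lemma aux_core2 {p q m : ℝ} (hp : 0 < p) (hq : 0 < q) (hpq : p + q = 1)
    (hm : 0 < m) :
    p * q * Real.sinh (2 * m) ^ 2 / (Real.sinh (p * (2 * m)) * Real.sinh (q * (2 * m))) ≤
      4 * (p * q) * Real.sinh m ^ 2 + Real.sinh (2 * m) / (2 * m) := by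
  have e1 : p * (2 * m) = m + (p - q) * m := by linear_combination m * hpq
  have e2 : q * (2 * m) = m - (p - q) * m := by linear_combination m * hpq
  have hDm : |(p - q) * m| ≤ m := by
    rw [abs_le]
    constructor
    · nlinarith
    · nlinarith
  have hbr := aux_bridge hm hDm
  have i1 : Real.sinh (p * (2 * m)) * Real.sinh (q * (2 * m)) =
      Real.sinh m ^ 2 - Real.sinh ((p - q) * m) ^ 2 := by
    rw [e1, e2, Real.sinh_add, Real.sinh_sub]
    linear_combination (Real.sinh m ^ 2) * Real.cosh_sq ((p - q) * m) -
      (Real.sinh ((p - q) * m) ^ 2) * Real.cosh_sq m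
  have i2 : Real.sinh (2 * m) = 2 * Real.sinh m * Real.cosh m := Real.sinh_two_mul m
  have hprod : 0 < Real.sinh (p * (2 * m)) * Real.sinh (q * (2 * m)) :=
    mul_pos (Real.sinh_pos_iff.2 (by positivity)) (Real.sinh_pos_iff.2 (by positivity))
  rw [div_le_iff₀ hprod, i1, i2]
  have i5 : 2 * Real.sinh m * Real.cosh m / (2 * m) = Real.sinh m * Real.cosh m / m := by
    rw [mul_assoc, mul_div_mul_left _ _ (two_ne_zero)]
  rw [i5]
  have hpq2 : p * q * (4 * m ^ 2) = m ^ 2 - ((p - q) * m) ^ 2 := by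
    linear_combination (m ^ 2 * (p + q + 1)) * hpq
  have hM2 : (0 : ℝ) < m ^ 2 := by positivity
  have h3 : p * q * (2 * Real.sinh m * Real.cosh m) ^ 2 =
      (m ^ 2 - ((p - q) * m) ^ 2) * Real.sinh m ^ 2 * Real.cosh m ^ 2 / m ^ 2 := by
    rw [eq_div_iff hM2.ne']
    linear_combination (Real.sinh m ^ 2 * Real.cosh m ^ 2) * hpq2
  have h4 : (4 * (p * q) * Real.sinh m ^ 2 + Real.sinh m * Real.cosh m / m) *
        (Real.sinh m ^ 2 - Real.sinh ((p - q) * m) ^ 2) =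
      (((m ^ 2 - ((p - q) * m) ^ 2) * Real.sinh m ^ 2 + m * Real.sinh m * Real.cosh m) *
        (Real.sinh m ^ 2 - Real.sinh ((p - q) * m) ^ 2)) / m ^ 2 := by
    rw [eq_div_iff hM2.ne']
    have hmne : m ≠ 0 := hm.ne'
    have hk : Real.sinh m * Real.cosh m / m * m ^ 2 = m * Real.sinh m * Real.cosh m := by
      rw [div_mul_eq_mul_div, div_eq_iff hmne]; ring
    linear_combination (Real.sinh m ^ 2 - Real.sinh ((p - q) * m) ^ 2) * hk +
      (Real.sinh m ^ 2 * (Real.sinh m ^ 2 - Real.sinh ((p - q) * m) ^ 2)) * hpq2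
  rw [h3, h4]
  exact (div_le_div_iff_of_pos_right hM2).2 hbr

private lemma aux_core {p q s : ℝ} (hp : 0 < p) (hq : 0 < q) (hpq : p + q = 1) (hs : 0 < s) :
    p * q * Real.sinh s ^ 2 / (Real.sinh (p * s) * Real.sinh (q * s)) ≤
      4 * (p * q) * Real.sinh (s / 2) ^ 2 + Real.sinh s / s := by
  have hm : 0 < s / 2 := by positivity
  have h := aux_core2 hp hq hpq hm
  rw [show 2 * (s / 2) = s by ring] at h
  exact h

private lemma aux_core' {p q s : ℝ} (hp : 0 < p) (hq : 0 < q) (hpq : p + q = 1) (hs : s ≠ 0) :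
    p * q * Real.sinh s ^ 2 / (Real.sinh (p * s) * Real.sinh (q * s)) ≤
      4 * (p * q) * Real.sinh (s / 2) ^ 2 + Real.sinh s / s := by
  rcases hs.lt_or_gt with h | h
  · have hcore := aux_core hp hq hpq (by linarith : (0:ℝ) < -s)
    have r1 : Real.sinh (-s) ^ 2 = Real.sinh s ^ 2 := by rw [Real.sinh_neg]; ring
    have r2 : Real.sinh (p * -s) * Real.sinh (q * -s) =
        Real.sinh (p * s) * Real.sinh (q * s) := by
      rw [mul_neg, mul_neg, Real.sinh_neg, Real.sinh_neg]; ring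
    have r3 : Real.sinh (-s / 2) ^ 2 = Real.sinh (s / 2) ^ 2 := by
      rw [show -s / 2 = -(s / 2) by ring, Real.sinh_neg]; ring
    have r4 : Real.sinh (-s) / (-s) = Real.sinh s / s := by
      rw [Real.sinh_neg]; field_simp
    rw [r1, r2, r3, r4] at hcore
    exact hcore
  · exact aux_core hp hq hpq h

private lemma aux_exp_sq (u : ℝ) : Real.exp (2 * u) - 1 = 2 * Real.exp u * Real.sinh u := by
  have h1 : Real.exp (2 * u) = Real.exp u * Real.exp u := by
    rw [← Real.exp_add]; ring_nf
  have h2 : Real.exp u * Real.exp (-u) = 1 := by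
    rw [← Real.exp_add]; simp
  rw [Real.sinh_eq]
  linear_combination h1 + h2

theorem wyd_le_diff_log_mean (x p : ℝ) (hx : 0 < x) (hx1 : x ≠ 1)
    (hp0 : 0 < p) (hp1 : p < 1) :
    p * (1 - p) * (x - 1) ^ 2 / ((x ^ p - 1) * (x ^ (1 - p) - 1)) ≤
      p * (1 - p) * (Real.sqrt x - 1) ^ 2 + (x - 1) / Real.log x := by
  obtain ⟨q, hqdef⟩ : ∃ q : ℝ, q = 1 - p := ⟨_, rfl⟩
  have hq0 : 0 < q := by rw [hqdef]; linarith
  have hpq : p + q = 1 := by rw [hqdef]; ring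
  obtain ⟨t, htdef⟩ : ∃ t : ℝ, t = Real.log x := ⟨_, rfl⟩
  have htne : t ≠ 0 := by
    rw [htdef]
    simp only [ne_eq, Real.log_eq_zero]
    push_neg
    exact ⟨ne_of_gt hx, hx1, by linarith⟩
  obtain ⟨s, hsdef⟩ : ∃ s : ℝ, s = t / 2 := ⟨_, rfl⟩
  have hsne : s ≠ 0 := by rw [hsdef]; exact div_ne_zero htne two_ne_zero
  have hxe : x = Real.exp t := by rw [htdef, Real.exp_log hx]
  have hA : x - 1 = 2 * Real.exp s * Real.sinh s := by
    rw [hsdef, hxe, ← aux_exp_sq (t / 2)]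
    ring_nf
  have hB : x ^ p - 1 = 2 * Real.exp (p * s) * Real.sinh (p * s) := by
    rw [hsdef, Real.rpow_def_of_pos hx, ← htdef, ← aux_exp_sq (p * (t / 2))]
    ring_nf
  have hC : x ^ q - 1 = 2 * Real.exp (q * s) * Real.sinh (q * s) := by
    rw [hsdef, Real.rpow_def_of_pos hx, ← htdef, ← aux_exp_sq (q * (t / 2))]
    ring_nf
  have hD : Real.sqrt x - 1 = 2 * Real.exp (s / 2) * Real.sinh (s / 2) := by
    rw [hsdef, Real.sqrt_eq_rpow, Real.rpow_def_of_pos hx, ← htdef,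
      ← aux_exp_sq (t / 2 / 2)]
    ring_nf
  have hlog : Real.log x = 2 * s := by rw [hsdef, ← htdef]; ring
  have hee : Real.exp (p * s) * Real.exp (q * s) = Real.exp s := by
    rw [← Real.exp_add]
    congr 1
    linear_combination s * hpq
  have hee2 : Real.exp (s / 2) * Real.exp (s / 2) = Real.exp s := by
    rw [← Real.exp_add]
    congr 1
    ring
  have hsp : Real.sinh (p * s) ≠ 0 := Real.sinh_ne_zero.2 (mul_ne_zero (ne_of_gt hp0) hsne)
  have hsq' : Real.sinh (q * s) ≠ 0 := Real.sinh_ne_zero.2 (mul_ne_zero (ne_of_gt hq0) hsne)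
  have hcore := aux_core' hp0 hq0 hpq hsne
  have hE : 0 < Real.exp s := Real.exp_pos s
  calc p * (1 - p) * (x - 1) ^ 2 / ((x ^ p - 1) * (x ^ (1 - p) - 1))
      = Real.exp s * (p * q * Real.sinh s ^ 2 /
          (Real.sinh (p * s) * Real.sinh (q * s))) := by
        rw [← hqdef, hA, hB, hC]
        have hden : 2 * Real.exp (p * s) * Real.sinh (p * s) *
            (2 * Real.exp (q * s) * Real.sinh (q * s)) =
            4 * Real.exp s * (Real.sinh (p * s) * Real.sinh (q * s)) := by
          linear_combination (4 * Real.sinh (p * s) * Real.sinh (q * s)) * hee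
        rw [hden]
        field_simp
        ring
    _ ≤ Real.exp s * (4 * (p * q) * Real.sinh (s / 2) ^ 2 + Real.sinh s / s) :=
        mul_le_mul_of_nonneg_left hcore hE.le
    _ = p * (1 - p) * (Real.sqrt x - 1) ^ 2 + (x - 1) / Real.log x := by
        rw [← hqdef, hD, hA, hlog]
        have h1 : p * q * (2 * Real.exp (s / 2) * Real.sinh (s / 2)) ^ 2 =
            Real.exp s * (4 * (p * q) * Real.sinh (s / 2) ^ 2) := by
          linear_combination (4 * p * q * Real.sinh (s / 2) ^ 2) * hee2
        have h2 : 2 * Real.exp s * Real.sinh s / (2 * s) =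
            Real.exp s * (Real.sinh s / s) := by
          rw [mul_assoc, mul_div_mul_left _ _ (two_ne_zero), mul_div_assoc]
        rw [h1, h2, mul_add]
end

section
/- For every real x > 0 with x ≠ 1 and every real p with 0 ≤ p ≤ 1, one has p(1-p)(√x - 1)² + L(x,1) ≤ (x+1)/2. -/
open Real

lemma aux_g (t : ℝ) (ht : 1 ≤ t) : 2 * (t - 1) ≤ (t + 1) * Real.log t := by
  have hmono : MonotoneOn (fun t : ℝ => (t + 1) * Real.log t - 2 * (t - 1)) (Set.Ici 1) := by
    apply monotoneOn_of_deriv_nonneg (convex_Ici 1)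
    · apply ContinuousOn.sub
      · exact (continuousOn_id.add continuousOn_const).mul
          (Real.continuousOn_log.mono (by intro y hy; simp at hy ⊢; linarith))
      · fun_prop
    · intro y hy
      rw [interior_Ici] at hy
      have hy0 : 0 < y := lt_trans one_pos hy
      exact ((hasDerivAt_id y).add_const 1 |>.mul (Real.hasDerivAt_log hy0.ne')
        |>.sub (((hasDerivAt_id y).sub_const 1).const_mul 2)).differentiableAt.differentiableWithinAt
    · intro y hy
      rw [interior_Ici] at hy
      have hy0 : 0 < y := lt_trans one_pos hy
      have hd : HasDerivAt (fun t : ℝ => (t + 1) * Real.log t - 2 * (t - 1))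
          (1 * Real.log y + (y + 1) * (1 / y) - 2 * 1) y := by
        have := ((hasDerivAt_id y).add_const 1 |>.mul (Real.hasDerivAt_log hy0.ne')
          |>.sub (((hasDerivAt_id y).sub_const 1).const_mul 2))
        rw [one_div]; exact this
      rw [hd.deriv]
      have hlog : 1 - 1/y ≤ Real.log y := by
        have := Real.log_le_sub_one_of_pos (show (0:ℝ) < 1/y by positivity)
        rw [Real.log_div one_ne_zero hy0.ne', Real.log_one] at this
        linarith
      have : (y + 1) * (1 / y) = 1 + 1/y := by field_simp
      rw [this]; linarith
  have := hmono (Set.self_mem_Ici) (show t ∈ Set.Ici 1 from ht) ht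
  simp [Real.log_one] at this
  linarith

lemma aux_key_s1 (t : ℝ) (ht : 0 < t) (ht1 : t ≠ 1) :
    (t - 1) / Real.log t ≤ (t + 1) / 2 := by
  rcases lt_or_gt_of_ne ht1 with h | h
  · have hlog : Real.log t < 0 := Real.log_neg ht h
    rw [div_le_iff_of_neg hlog]
    have h2 : 1 ≤ 1 / t := by rw [le_div_iff₀ ht]; linarith
    have := aux_g (1/t) h2
    rw [Real.log_div one_ne_zero ht.ne', Real.log_one] at this
    have h4 := mul_le_mul_of_nonneg_left this ht.le
    have h5 : t * (1/t) = 1 := by field_simp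
    nlinarith [h4, h5]
  · have hlog : 0 < Real.log t := Real.log_pos h
    rw [div_le_div_iff₀ hlog two_pos]
    have := aux_g t h.le
    linarith

theorem diff_log_mean_le_arith (x p : ℝ) (hx : 0 < x) (hx1 : x ≠ 1)
    (hp0 : 0 ≤ p) (hp1 : p ≤ 1) :
    p * (1 - p) * (Real.sqrt x - 1) ^ 2 + (x - 1) / Real.log x ≤ (x + 1) / 2 := by
  set s := Real.sqrt x with hs
  have hs0 : 0 < s := Real.sqrt_pos.mpr hx
  have hsx : s ^ 2 = x := Real.sq_sqrt hx.le
  have hs1 : s ≠ 1 := by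
    intro h; apply hx1; rw [← hsx, h]; norm_num
  have hlogx : Real.log x = 2 * Real.log s := by
    rw [← hsx, Real.log_pow]; push_cast; ring
  have hL : (x - 1) / Real.log x = ((s - 1) / Real.log s) * ((s + 1) / 2) := by
    rw [hlogx, ← hsx]
    have hlogs : Real.log s ≠ 0 := Real.log_ne_zero_of_pos_of_ne_one hs0 hs1
    field_simp
    ring
  have hkey := aux_key_s1 s hs0 hs1
  have hLnn : 0 ≤ (s - 1) / Real.log s := by
    rcases lt_or_gt_of_ne hs1 with h | h
    · exact le_of_lt (div_pos_of_neg_of_neg (by linarith) (Real.log_neg hs0 h))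
    · exact le_of_lt (div_pos (by linarith) (Real.log_pos h))
  have hA : 0 ≤ (s + 1) / 2 := by linarith
  have hLA : (x - 1) / Real.log x ≤ ((s + 1) / 2) ^ 2 := by
    rw [hL, sq]
    exact mul_le_mul_of_nonneg_right hkey hA
  nlinarith [sq_nonneg (p - 1/2), sq_nonneg (s - 1), sq_nonneg (2*p - 1),
    mul_nonneg (mul_nonneg hp0 (by linarith : (0:ℝ) ≤ 1 - p)) (sq_nonneg (s-1))]
end

section
/- For all reals x, y > 0 with x ≠ y and every real p with 0 < p < 1, the two-variable Wigner–Yanase–Dyson function satisfies W_p(x,y) ≤ p(1-p)(√x - √y)² + L(x,y). -/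
open Real

/-- `sinh b ≤ b * cosh b` for `b ≥ 0`. -/
lemma wyd_aux_R {b : ℝ} (hb : 0 ≤ b) : Real.sinh b ≤ b * Real.cosh b := by
  have mono : MonotoneOn (fun x : ℝ => x * Real.cosh x - Real.sinh x) (Set.Icc 0 b) := by
    apply monotoneOn_of_deriv_nonneg (convex_Icc 0 b)
    · exact ((continuous_id.mul Real.continuous_cosh).sub Real.continuous_sinh).continuousOn
    · apply Differentiable.differentiableOn
      exact (differentiable_id.mul Real.differentiable_cosh).sub Real.differentiable_sinh
    · intro x hx
      rw [interior_Icc] at hx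
      have hd : HasDerivAt (fun x : ℝ => x * Real.cosh x - Real.sinh x)
          (1 * Real.cosh x + x * Real.sinh x - Real.cosh x) x :=
        ((hasDerivAt_id x).mul (Real.hasDerivAt_cosh x)).sub (Real.hasDerivAt_sinh x)
      rw [hd.deriv]
      have h1 : 0 ≤ x * Real.sinh x := by
        apply mul_nonneg hx.1.le
        exact Real.sinh_nonneg_iff.mpr hx.1.le
      linarith
  have h := mono (Set.left_mem_Icc.mpr hb) (Set.right_mem_Icc.mpr hb) hb
  simpa using h

/-- `a * sinh b ≤ b * sinh a` for `0 ≤ b ≤ a`. -/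
lemma wyd_aux_S {a b : ℝ} (hb : 0 ≤ b) (hba : b ≤ a) : a * Real.sinh b ≤ b * Real.sinh a := by
  have mono : MonotoneOn (fun x : ℝ => b * Real.sinh x - Real.sinh b * x) (Set.Icc b a) := by
    apply monotoneOn_of_deriv_nonneg (convex_Icc b a)
    · exact ((continuous_const.mul Real.continuous_sinh).sub
        (continuous_const.mul continuous_id)).continuousOn
    · apply Differentiable.differentiableOn
      exact (Real.differentiable_sinh.const_mul b).sub ((differentiable_id.const_mul _))
    · intro x hx
      rw [interior_Icc] at hx
      have hd : HasDerivAt (fun x : ℝ => b * Real.sinh x - Real.sinh b * x)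
          (b * Real.cosh x - Real.sinh b * 1) x :=
        ((Real.hasDerivAt_sinh x).const_mul b).sub ((hasDerivAt_id x).const_mul (Real.sinh b))
      rw [hd.deriv]
      have h1 : Real.sinh b ≤ b * Real.cosh b := wyd_aux_R hb
      have h2 : Real.cosh b ≤ Real.cosh x := by
        rw [Real.cosh_le_cosh, abs_of_nonneg hb, abs_of_nonneg (hb.trans hx.1.le)]
        exact hx.1.le
      nlinarith
  have h := mono (Set.left_mem_Icc.mpr hba) (Set.right_mem_Icc.mpr hba) hba
  simp only at h
  nlinarith [h]

/-- `u * sinh v * cosh u ≤ v * sinh u * cosh v` for `0 ≤ u ≤ v`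
(i.e. `tanh u / u` is decreasing). -/
lemma wyd_aux_T {u v : ℝ} (hu : 0 ≤ u) (huv : u ≤ v) :
    u * Real.sinh v * Real.cosh u ≤ v * Real.sinh u * Real.cosh v := by
  have h1 : 2 * (u * Real.sinh v * Real.cosh u)
      = u * (Real.sinh (v + u) + Real.sinh (v - u)) := by
    rw [Real.sinh_add, Real.sinh_sub]; ring
  have h2 : 2 * (v * Real.sinh u * Real.cosh v)
      = v * (Real.sinh (v + u) - Real.sinh (v - u)) := by
    rw [Real.sinh_add, Real.sinh_sub]; ring
  have hS : (v + u) * Real.sinh (v - u) ≤ (v - u) * Real.sinh (v + u) :=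
    wyd_aux_S (by linarith) (by linarith)
  nlinarith [hS]

/-- Key inequality: `(v² - w²) sinh v cosh² w ≤ v (sinh² v - sinh² w) cosh v` for `0 ≤ w ≤ v`. -/
lemma wyd_aux_key {v w : ℝ} (hw : 0 ≤ w) (hwv : w ≤ v) :
    (v ^ 2 - w ^ 2) * Real.sinh v * Real.cosh w ^ 2 ≤
      v * (Real.sinh v ^ 2 - Real.sinh w ^ 2) * Real.cosh v := by
  have hv : 0 ≤ v := hw.trans hwv
  have mono : MonotoneOn
      (fun u : ℝ => v * Real.cosh v * Real.cosh u ^ 2 - u ^ 2 * (Real.sinh v * Real.cosh w ^ 2))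
      (Set.Icc w v) := by
    apply monotoneOn_of_deriv_nonneg (convex_Icc w v)
    · apply Continuous.continuousOn
      exact (continuous_const.mul (Real.continuous_cosh.pow 2)).sub
        ((continuous_pow 2).mul continuous_const)
    · apply Differentiable.differentiableOn
      exact ((Real.differentiable_cosh.pow 2).const_mul _).sub
        ((differentiable_pow 2).mul_const _)
    · intro u hu
      rw [interior_Icc] at hu
      have hu0 : 0 ≤ u := hw.trans hu.1.le
      have hd : HasDerivAt
          (fun u : ℝ => v * Real.cosh v * Real.cosh u ^ 2 - u ^ 2 * (Real.sinh v * Real.cosh w ^ 2))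
          (v * Real.cosh v * (2 * Real.cosh u ^ 1 * Real.sinh u)
            - 2 * u ^ 1 * (Real.sinh v * Real.cosh w ^ 2)) u := by
        exact (((Real.hasDerivAt_cosh u).pow 2).const_mul _).sub
          ((hasDerivAt_pow 2 u).mul_const _)
      rw [hd.deriv]
      simp only [pow_one]
      have hT := wyd_aux_T hu0 hu.2.le
      have hcw : Real.cosh w ≤ Real.cosh u := by
        rw [Real.cosh_le_cosh, abs_of_nonneg hw, abs_of_nonneg hu0]
        exact hu.1.le
      have hcw0 : 0 < Real.cosh w := Real.cosh_pos w
      have hcu0 : 0 < Real.cosh u := Real.cosh_pos u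
      have hsv : 0 ≤ Real.sinh v := Real.sinh_nonneg_iff.mpr hv
      have h3 : u * Real.sinh v * Real.cosh u * Real.cosh u
          ≤ v * Real.sinh u * Real.cosh v * Real.cosh u :=
        mul_le_mul_of_nonneg_right hT hcu0.le
      have h4 : u * Real.sinh v * (Real.cosh w * Real.cosh w)
          ≤ u * Real.sinh v * (Real.cosh u * Real.cosh u) := by
        apply mul_le_mul_of_nonneg_left _ (mul_nonneg hu0 hsv)
        nlinarith
      nlinarith [h3, h4]
  have h := mono (Set.left_mem_Icc.mpr hwv) (Set.right_mem_Icc.mpr hwv) hwv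
  simp only at h
  have e1 := Real.cosh_sq v
  have e2 := Real.cosh_sq w
  have e3 : Real.sinh v ^ 2 - Real.sinh w ^ 2 = Real.cosh v ^ 2 - Real.cosh w ^ 2 := by
    linarith
  rw [e3]
  nlinarith [h]

/-- Key inequality, multiplied form, both signs of `w`. -/
lemma wyd_aux_key3 {v w : ℝ} (hv : 0 < v) (hw2 : w ^ 2 ≤ v ^ 2) :
    (v ^ 2 - w ^ 2) * (Real.sinh (v - w) + Real.sinh (v + w)) ^ 2 ≤
      2 * v * (Real.sinh (2 * v) * (Real.sinh (v - w) * Real.sinh (v + w))) := by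
  have hsv : 0 ≤ Real.sinh v := Real.sinh_nonneg_iff.mpr hv.le
  have keyvw : (v ^ 2 - w ^ 2) * Real.sinh v * Real.cosh w ^ 2 ≤
      v * (Real.sinh v ^ 2 - Real.sinh w ^ 2) * Real.cosh v := by
    rcases le_total 0 w with hw | hw
    · exact wyd_aux_key hw (by nlinarith)
    · have := wyd_aux_key (show (0:ℝ) ≤ -w by linarith) (show -w ≤ v by nlinarith)
      simpa [Real.sinh_neg, Real.cosh_neg, neg_sq] using this
  have hsub : Real.sinh (v - w) = Real.sinh v * Real.cosh w - Real.cosh v * Real.sinh w :=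
    Real.sinh_sub v w
  have hadd : Real.sinh (v + w) = Real.sinh v * Real.cosh w + Real.cosh v * Real.sinh w :=
    Real.sinh_add v w
  have h2v : Real.sinh (2 * v) = 2 * Real.sinh v * Real.cosh v := by
    rw [two_mul, Real.sinh_add]; ring
  have hABm : Real.sinh (v - w) * Real.sinh (v + w) = Real.sinh v ^ 2 - Real.sinh w ^ 2 := by
    rw [hsub, hadd]
    linear_combination Real.sinh v ^ 2 * Real.cosh_sq w - Real.sinh w ^ 2 * Real.cosh_sq v
  have hAB2 : Real.sinh (v - w) + Real.sinh (v + w) = 2 * Real.sinh v * Real.cosh w := by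
    rw [hsub, hadd]; ring
  rw [hABm, hAB2, h2v]
  nlinarith [mul_le_mul_of_nonneg_left keyvw hsv]

/-- Core hyperbolic inequality. -/
lemma wyd_aux_core (p s : ℝ) (hp0 : 0 < p) (hp1 : p < 1) (hs : 0 < s) :
    p * (1 - p) * Real.sinh s ^ 2 / (Real.sinh (p * s) * Real.sinh ((1 - p) * s)) ≤
      p * (1 - p) * (2 * Real.cosh s - 2) + Real.sinh s / s := by
  have hq0 : 0 < 1 - p := by linarith
  have hA : 0 < Real.sinh (p * s) := Real.sinh_pos_iff.mpr (by positivity)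
  have hB : 0 < Real.sinh ((1 - p) * s) := Real.sinh_pos_iff.mpr (by positivity)
  have hsum : Real.sinh s
      = Real.sinh (p * s) * Real.cosh ((1 - p) * s)
        + Real.cosh (p * s) * Real.sinh ((1 - p) * s) := by
    have := Real.sinh_add (p * s) ((1 - p) * s)
    rw [show p * s + (1 - p) * s = s by ring] at this
    exact this
  have hcosh : Real.cosh s
      = Real.cosh (p * s) * Real.cosh ((1 - p) * s)
        + Real.sinh (p * s) * Real.sinh ((1 - p) * s) := by
    have := Real.cosh_add (p * s) ((1 - p) * s)
    rw [show p * s + (1 - p) * s = s by ring] at this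
    exact this
  have hCA2 : Real.cosh (p * s) ^ 2 = Real.sinh (p * s) ^ 2 + 1 := Real.cosh_sq (p * s)
  have hCB2 : Real.cosh ((1 - p) * s) ^ 2 = Real.sinh ((1 - p) * s) ^ 2 + 1 :=
    Real.cosh_sq ((1 - p) * s)
  have key : p * (1 - p) * s * (Real.sinh (p * s) + Real.sinh ((1 - p) * s)) ^ 2
      ≤ Real.sinh s * (Real.sinh (p * s) * Real.sinh ((1 - p) * s)) := by
    have hw2 : (s / 2 - p * s) ^ 2 ≤ (s / 2) ^ 2 := by
      nlinarith [mul_nonneg (mul_nonneg hp0.le hq0.le) (sq_nonneg s)]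
    have h3 := wyd_aux_key3 (v := s / 2) (w := s / 2 - p * s) (by linarith) hw2
    rw [show s / 2 - (s / 2 - p * s) = p * s by ring,
      show s / 2 + (s / 2 - p * s) = (1 - p) * s by ring,
      show 2 * (s / 2) = s by ring] at h3
    apply le_of_mul_le_mul_left _ hs
    calc s * (p * (1 - p) * s * (Real.sinh (p * s) + Real.sinh ((1 - p) * s)) ^ 2)
        = ((s / 2) ^ 2 - (s / 2 - p * s) ^ 2)
            * (Real.sinh (p * s) + Real.sinh ((1 - p) * s)) ^ 2 := by ring
      _ ≤ s * (Real.sinh s * (Real.sinh (p * s) * Real.sinh ((1 - p) * s))) := h3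
  rw [div_le_iff₀ (by positivity)]
  have hid : p * (1 - p) * Real.sinh s ^ 2
      = p * (1 - p) * (2 * Real.cosh s - 2)
          * (Real.sinh (p * s) * Real.sinh ((1 - p) * s))
        + p * (1 - p) * (Real.sinh (p * s) + Real.sinh ((1 - p) * s)) ^ 2 := by
    linear_combination (p * (1 - p) * (Real.sinh s
        + (Real.sinh (p * s) * Real.cosh ((1 - p) * s)
          + Real.cosh (p * s) * Real.sinh ((1 - p) * s)))) * hsum
      - 2 * p * (1 - p) * Real.sinh (p * s) * Real.sinh ((1 - p) * s) * hcosh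
      + p * (1 - p) * Real.sinh ((1 - p) * s) ^ 2 * hCA2
      + p * (1 - p) * Real.sinh (p * s) ^ 2 * hCB2
  have h2 : p * (1 - p) * (Real.sinh (p * s) + Real.sinh ((1 - p) * s)) ^ 2
      ≤ Real.sinh s / s * (Real.sinh (p * s) * Real.sinh ((1 - p) * s)) := by
    rw [div_mul_eq_mul_div, le_div_iff₀ hs]
    nlinarith [key]
  nlinarith [h2, hid]

/-- The main inequality for `y < x`. -/
lemma wyd_aux_main (x y p : ℝ) (hx : 0 < x) (hy : 0 < y) (hyx : y < x)
    (hp0 : 0 < p) (hp1 : p < 1) :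
    p * (1 - p) * (x - y) ^ 2 / ((x ^ p - y ^ p) * (x ^ (1 - p) - y ^ (1 - p))) ≤
      p * (1 - p) * (Real.sqrt x - Real.sqrt y) ^ 2 +
        (x - y) / (Real.log x - Real.log y) := by
  have hq0 : 0 < 1 - p := by linarith
  set s : ℝ := (Real.log x - Real.log y) / 2 with hsdef
  have hs : 0 < s := by
    have := Real.log_lt_log hy hyx
    rw [hsdef]; linarith
  set m : ℝ := Real.sqrt (x * y) with hmdef
  have hm : 0 < m := Real.sqrt_pos.mpr (by positivity)
  have hm_eq : m = Real.exp ((Real.log x + Real.log y) / 2) := by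
    rw [hmdef, Real.sqrt_eq_rpow, Real.rpow_def_of_pos (by positivity),
      Real.log_mul hx.ne' hy.ne']
    ring_nf
  have hxm : x = m * Real.exp s := by
    rw [hm_eq, hsdef, ← Real.exp_add,
      show (Real.log x + Real.log y) / 2 + (Real.log x - Real.log y) / 2 = Real.log x by ring,
      Real.exp_log hx]
  have hym : y = m * Real.exp (-s) := by
    rw [hm_eq, hsdef, ← Real.exp_add,
      show (Real.log x + Real.log y) / 2 + -((Real.log x - Real.log y) / 2) = Real.log y by ring,
      Real.exp_log hy]
  have hxy' : x - y = m * (2 * Real.sinh s) := by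
    rw [hxm, hym, Real.sinh_eq]; ring
  have hlog : Real.log x - Real.log y = 2 * s := by rw [hsdef]; ring
  have hrp : ∀ t : ℝ, x ^ t - y ^ t = m ^ t * (2 * Real.sinh (t * s)) := by
    intro t
    rw [hxm, hym, Real.mul_rpow hm.le (Real.exp_pos s).le,
      Real.mul_rpow hm.le (Real.exp_pos (-s)).le, ← Real.exp_mul, ← Real.exp_mul,
      Real.sinh_eq, show s * t = t * s by ring, show -s * t = -(t * s) by ring]
    ring
  have hxp := hrp p
  have hxq := hrp (1 - p)
  have hmpq : m ^ p * m ^ (1 - p) = m := by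
    rw [← Real.rpow_add hm]; simp
  have hsq : (Real.sqrt x - Real.sqrt y) ^ 2 = m * (2 * Real.cosh s - 2) := by
    have hsx : Real.sqrt x * Real.sqrt y = m := by
      rw [hmdef, ← Real.sqrt_mul hx.le]
    have h1 : (Real.sqrt x - Real.sqrt y) ^ 2 = x + y - 2 * m := by
      have := Real.sq_sqrt hx.le
      have := Real.sq_sqrt hy.le
      nlinarith [hsx]
    rw [h1, hxm, hym, Real.cosh_eq]; ring
  have hA : 0 < Real.sinh (p * s) := Real.sinh_pos_iff.mpr (by positivity)
  have hB : 0 < Real.sinh ((1 - p) * s) := Real.sinh_pos_iff.mpr (by positivity)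
  have hcore := wyd_aux_core p s hp0 hp1 hs
  rw [hxp, hxq, hxy', hsq, hlog]
  have hden : m ^ p * (2 * Real.sinh (p * s)) * (m ^ (1 - p) * (2 * Real.sinh ((1 - p) * s)))
      = m * (4 * (Real.sinh (p * s) * Real.sinh ((1 - p) * s))) := by
    rw [show m ^ p * (2 * Real.sinh (p * s)) * (m ^ (1 - p) * (2 * Real.sinh ((1 - p) * s)))
        = m ^ p * m ^ (1 - p) * (4 * (Real.sinh (p * s) * Real.sinh ((1 - p) * s))) by ring,
      hmpq]
  rw [hden]
  have lhs_eq : p * (1 - p) * (m * (2 * Real.sinh s)) ^ 2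
        / (m * (4 * (Real.sinh (p * s) * Real.sinh ((1 - p) * s))))
      = m * (p * (1 - p) * Real.sinh s ^ 2 / (Real.sinh (p * s) * Real.sinh ((1 - p) * s))) := by
    field_simp
    ring
  have rhs_eq : p * (1 - p) * (m * (2 * Real.cosh s - 2)) + m * (2 * Real.sinh s) / (2 * s)
      = m * (p * (1 - p) * (2 * Real.cosh s - 2) + Real.sinh s / s) := by
    field_simp
  rw [lhs_eq, rhs_eq]
  exact mul_le_mul_of_nonneg_left hcore hm.le

theorem wyd_two_var_le_diff_log_mean (x y p : ℝ) (hx : 0 < x) (hy : 0 < y) (hxy : x ≠ y)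
    (hp0 : 0 < p) (hp1 : p < 1) :
    p * (1 - p) * (x - y) ^ 2 / ((x ^ p - y ^ p) * (x ^ (1 - p) - y ^ (1 - p))) ≤
      p * (1 - p) * (Real.sqrt x - Real.sqrt y) ^ 2 +
        (x - y) / (Real.log x - Real.log y) := by
  rcases hxy.lt_or_gt with h | h
  · have main := wyd_aux_main y x p hy hx h hp0 hp1
    have e1 : (x - y) ^ 2 = (y - x) ^ 2 := by ring
    have e2 : (x ^ p - y ^ p) * (x ^ (1 - p) - y ^ (1 - p))
        = (y ^ p - x ^ p) * (y ^ (1 - p) - x ^ (1 - p)) := by ring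
    have e3 : (Real.sqrt x - Real.sqrt y) ^ 2 = (Real.sqrt y - Real.sqrt x) ^ 2 := by ring
    have e4 : (x - y) / (Real.log x - Real.log y) = (y - x) / (Real.log y - Real.log x) := by
      rw [show y - x = -(x - y) by ring, show Real.log y - Real.log x
        = -(Real.log x - Real.log y) by ring, neg_div_neg_eq]
    rw [e1, e2, e3, e4]
    exact main
  · exact wyd_aux_main x y p hx hy h hp0 hp1
end

section
/- For every real x > 0, one has ((√x + 1)/2)² ≥ S(√x)·√x, where S is the Specht ratio. -/
open Real

/-- The Specht ratio `S(t)`. -/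
noncomputable def spechtRatio (t : ℝ) : ℝ :=
  if t = 1 then 1
  else t ^ (1 / (t - 1)) / (Real.exp 1 * ((1 / (t - 1)) * Real.log t))


lemma log_ge_two_mul (t : ℝ) (ht : 1 ≤ t) : 2 * (t - 1) / (t + 1) ≤ Real.log t := by
  have ht0 : (0:ℝ) < t := lt_of_lt_of_le one_pos ht
  set f : ℝ → ℝ := fun s => Real.log s + 4 * (s + 1)⁻¹ with hf
  have hd : ∀ s ∈ Set.Ioi (1:ℝ), HasDerivAt f (s⁻¹ + 4 * (-1 / (s + 1) ^ 2)) s := by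
    intro s hs
    have hs0 : (0:ℝ) < s := lt_trans one_pos hs
    have h1 : HasDerivAt (fun y : ℝ => y + 1) 1 s := (hasDerivAt_id s).add_const 1
    have h2 : HasDerivAt (fun y : ℝ => (y + 1)⁻¹) (-1 / (s + 1) ^ 2) s :=
      h1.inv (by positivity)
    exact (Real.hasDerivAt_log hs0.ne').add (h2.const_mul 4)
  have mono : MonotoneOn f (Set.Ici (1:ℝ)) := by
    apply monotoneOn_of_deriv_nonneg (convex_Ici 1)
    · apply ContinuousOn.add
      · exact Real.continuousOn_log.mono (by intro s hs; exact ne_of_gt (lt_of_lt_of_le one_pos hs))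
      · apply ContinuousOn.mul continuousOn_const
        apply ContinuousOn.inv₀ (by fun_prop)
        intro s hs; have : (1:ℝ) ≤ s := hs; positivity
    · rw [interior_Ici]
      intro s hs
      exact (hd s hs).differentiableAt.differentiableWithinAt
    · rw [interior_Ici]
      intro s hs
      rw [(hd s hs).deriv]
      have hs1 : (1:ℝ) < s := hs
      have hs0 : (0:ℝ) < s := lt_trans one_pos hs1
      have : s⁻¹ + 4 * (-1 / (s + 1) ^ 2) = (s - 1)^2 / (s * (s + 1)^2) := by
        field_simp; ring
      rw [this]; positivity
  have h1 : f 1 ≤ f t := mono (by simp) (by simpa using ht) ht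
  have hf1 : f 1 = 2 := by simp [hf]; norm_num
  have : 2 - 4 * (t+1)⁻¹ ≤ Real.log t := by
    rw [hf1] at h1; simp only [hf] at h1; linarith
  have ht1 : (0:ℝ) < t + 1 := by linarith
  rw [div_le_iff₀ ht1]
  have h4 : 4 * (t+1)⁻¹ = 4 / (t+1) := by ring
  calc 2 * (t-1) = (2 - 4/(t+1)) * (t+1) := by field_simp; ring
    _ ≤ Real.log t * (t+1) := by
        apply mul_le_mul_of_nonneg_right _ (le_of_lt ht1)
        rw [← h4]; exact this



lemma specht_exp (t : ℝ) (ht : 0 < t) (hne : t ≠ 1) :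
    spechtRatio t = Real.exp (Real.log t / (t - 1) - 1) / (Real.log t / (t - 1)) := by
  unfold spechtRatio
  rw [if_neg hne]
  rw [Real.rpow_def_of_pos ht]
  rw [Real.exp_sub]
  have : Real.log t * (1 / (t - 1)) = Real.log t / (t - 1) := by ring
  rw [this]
  rw [div_div]
  congr 1
  ring




lemma specht_mul_le (t : ℝ) (ht : 1 ≤ t) : spechtRatio t * t ≤ ((t + 1) / 2) ^ 2 := by
  rcases eq_or_lt_of_le ht with h1 | h1
  · rw [← h1]; unfold spechtRatio; norm_num
  · have ht0 : (0:ℝ) < t := lt_trans one_pos h1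
    have htm : (0:ℝ) < t - 1 := by linarith
    have ht1 : (0:ℝ) < t + 1 := by linarith
    set L := Real.log t / (t - 1) with hL
    set a := 2 / (t + 1) with haa
    have ha0 : 0 < a := by positivity
    have hLa : a ≤ L := by
      rw [hL, haa]
      rw [le_div_iff₀ htm, div_mul_eq_mul_div, div_le_iff₀ ht1]
      have := log_ge_two_mul t ht
      rw [div_le_iff₀ ht1] at this
      linarith
    have hL1 : L ≤ 1 := by
      rw [hL, div_le_one htm]
      exact Real.log_le_sub_one_of_pos ht0
    have hL0 : 0 < L := lt_of_lt_of_le ha0 hLa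
    rw [specht_exp t ht0 (ne_of_gt h1), ← hL]
    have key : Real.exp (L - 1) / L ≤ Real.exp (a - 1) / a := by
      rw [div_le_div_iff₀ hL0 ha0]
      have hden : 0 < 1 - (L - a) := by linarith
      have hE : Real.exp (L - a) ≤ L / a := by
        have h1' : Real.exp (L - a) ≤ 1 / (1 - (L - a)) := by
          rw [le_div_iff₀ hden]
          have hmul : Real.exp (L - a) * Real.exp (-(L - a)) = 1 := by
            rw [← Real.exp_add]; simp
          nlinarith [Real.add_one_le_exp (-(L - a)), Real.exp_pos (L - a)]
        have h2' : 1 / (1 - (L - a)) ≤ L / a := by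
          rw [div_le_div_iff₀ hden ha0]
          nlinarith
        linarith
      have hsplit : Real.exp (L - 1) = Real.exp (a - 1) * Real.exp (L - a) := by
        rw [← Real.exp_add]; ring_nf
      calc Real.exp (L - 1) * a = Real.exp (a - 1) * (Real.exp (L - a) * a) := by
            rw [hsplit]; ring
        _ ≤ Real.exp (a - 1) * L := by
            apply mul_le_mul_of_nonneg_left _ (Real.exp_pos _).le
            rw [le_div_iff₀ ha0] at hE
            linarith [hE]
        _ = Real.exp (a - 1) * L := rfl
    have hr : Real.exp (a - 1) ≤ (t + 1) / (2 * t) := by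
      have ha1 : a - 1 = -((t - 1) / (t + 1)) := by rw [haa]; field_simp; ring
      have hx : (0:ℝ) < 1 + (t - 1) / (t + 1) := by positivity
      rw [ha1, Real.exp_neg]
      have h3 : 1 + (t - 1) / (t + 1) ≤ Real.exp ((t - 1) / (t + 1)) := by
        linarith [Real.add_one_le_exp ((t - 1) / (t + 1))]
      have h4 : (Real.exp ((t - 1) / (t + 1)))⁻¹ ≤ (1 + (t - 1) / (t + 1))⁻¹ :=
        inv_anti₀ hx h3
      have h5 : (1 + (t - 1) / (t + 1))⁻¹ = (t + 1) / (2 * t) := by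
        rw [inv_eq_one_div]
        rw [div_eq_div_iff (by positivity) (by positivity)]
        field_simp
        ring
      linarith [h4, h5 ▸ h4]
    calc Real.exp (L - 1) / L * t ≤ Real.exp (a - 1) / a * t := by
          apply mul_le_mul_of_nonneg_right key ht0.le
      _ = Real.exp (a - 1) * (t * (t + 1) / 2) := by rw [haa]; field_simp
      _ ≤ (t + 1) / (2 * t) * (t * (t + 1) / 2) := by
          apply mul_le_mul_of_nonneg_right hr (by positivity)
      _ = ((t + 1) / 2) ^ 2 := by field_simp




lemma specht_symm (t : ℝ) (ht : 0 < t) (h1 : t ≠ 1) : spechtRatio t⁻¹ = spechtRatio t := by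
  have hti : (0:ℝ) < t⁻¹ := by positivity
  have hti1 : t⁻¹ ≠ 1 := by
    intro h; apply h1; field_simp at h; exact h.symm
  have htm : t - 1 ≠ 0 := sub_ne_zero.mpr h1
  rw [specht_exp t ht h1, specht_exp t⁻¹ hti hti1]
  set L := Real.log t / (t - 1) with hL
  have hLi : Real.log t⁻¹ / (t⁻¹ - 1) = t * L := by
    rw [Real.log_inv, hL]
    field_simp [sub_ne_zero.mpr (Ne.symm h1)]
    ring
  rw [hLi]
  have hexp : Real.exp (t * L - 1) = Real.exp (L - 1) * t := by
    have h2 : Real.exp ((t - 1) * L) = t := by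
      have : (t - 1) * L = Real.log t := by rw [hL]; field_simp
      rw [this, Real.exp_log ht]
    calc Real.exp (t * L - 1) = Real.exp (L - 1) * Real.exp ((t - 1) * L) := by
          rw [← Real.exp_add]; ring_nf
      _ = Real.exp (L - 1) * t := by rw [h2]
  have hLne : L ≠ 0 := div_ne_zero (Real.log_ne_zero_of_pos_of_ne_one ht h1) htm
  rw [hexp]
  field_simp

theorem sq_avg_sqrt_ge_specht (x : ℝ) (hx : 0 < x) :
    ((Real.sqrt x + 1) / 2) ^ 2 ≥ spechtRatio (Real.sqrt x) * Real.sqrt x := by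
  set t := Real.sqrt x with htdef
  have ht : 0 < t := Real.sqrt_pos.mpr hx
  rcases le_or_gt 1 t with h | h
  · exact specht_mul_le t h
  · have h1 : t ≠ 1 := ne_of_lt h
    have hti : (1:ℝ) ≤ t⁻¹ := by
      rw [le_inv_comm₀ one_pos ht]; simpa using h.le
    have key := specht_mul_le t⁻¹ hti
    have h2 : spechtRatio t * t = spechtRatio t⁻¹ * t⁻¹ * t ^ 2 := by
      rw [specht_symm t ht h1]
      field_simp
    rw [ge_iff_le, h2]
    calc spechtRatio t⁻¹ * t⁻¹ * t ^ 2 ≤ ((t⁻¹ + 1) / 2) ^ 2 * t ^ 2 := by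
          apply mul_le_mul_of_nonneg_right key (by positivity)
      _ = ((t + 1) / 2) ^ 2 := by
          rw [← mul_pow]
          congr 1
          field_simp
          ring
end

section
/- For every real x > 1, one has (x - 1)·x^{x/(x-1)} / (e · log x) ≤ ((x + 1)/2)². -/
open Real

/-- For `x ≥ 1`, `2(x-1)/(x+1) ≤ log x`. -/
lemma log_lower_bound {x : ℝ} (hx : 1 ≤ x) : 2 * (x - 1) / (x + 1) ≤ Real.log x := by
  set f : ℝ → ℝ := fun s => Real.log s - 2 * (s - 1) / (s + 1) with hf
  have hd : ∀ t : ℝ, 0 < t → HasDerivAt f (t⁻¹ - 4 / (t + 1) ^ 2) t := by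
    intro t ht
    have h1 : HasDerivAt Real.log t⁻¹ t := Real.hasDerivAt_log (ne_of_gt ht)
    have hnum : HasDerivAt (fun s : ℝ => 2 * (s - 1)) 2 t := by
      simpa using ((hasDerivAt_id t).sub_const 1).const_mul 2
    have hden : HasDerivAt (fun s : ℝ => s + 1) 1 t := (hasDerivAt_id t).add_const 1
    have hden' : t + 1 ≠ 0 := by nlinarith
    have h2 := hnum.div hden hden'
    have h2' : HasDerivAt (fun s : ℝ => 2 * (s - 1) / (s + 1)) (4 / (t + 1) ^ 2) t := by
      refine h2.congr_deriv ?_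
      rw [div_eq_div_iff (pow_ne_zero 2 hden') (pow_ne_zero 2 hden')]
      ring
    exact h1.sub h2'
  have hmono : MonotoneOn f (Set.Ici 1) := by
    apply monotoneOn_of_deriv_nonneg (convex_Ici 1)
    · apply DifferentiableOn.continuousOn (𝕜 := ℝ) (f := f)
      intro t ht
      exact ((hd t (lt_of_lt_of_le zero_lt_one ht)).differentiableAt).differentiableWithinAt
    · intro t ht
      rw [interior_Ici] at ht
      exact ((hd t (lt_trans zero_lt_one ht)).differentiableAt).differentiableWithinAt
    · intro t ht
      rw [interior_Ici] at ht
      have ht0 : 0 < t := lt_trans zero_lt_one ht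
      rw [(hd t ht0).deriv]
      have h1 : t⁻¹ - 4 / (t + 1) ^ 2 = (t - 1) ^ 2 / (t * (t + 1) ^ 2) := by
        field_simp
        ring
      rw [h1]
      positivity
  have h1 := hmono (Set.mem_Ici.mpr le_rfl) (Set.mem_Ici.mpr hx) hx
  simp only [hf, Real.log_one] at h1
  norm_num at h1
  linarith

theorem specht_reformulation (x : ℝ) (hx : 1 < x) :
    (x - 1) * x ^ (x / (x - 1)) / (Real.exp 1 * Real.log x) ≤ ((x + 1) / 2) ^ 2 := by
  have hx0 : 0 < x := by linarith
  have hx1 : 0 < x - 1 := by linarith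
  have hL : 0 < Real.log x := Real.log_pos hx
  set L := Real.log x with hLdef
  have hLlt : L < x - 1 := by
    have := Real.log_lt_sub_one_of_pos hx0 (by linarith : x ≠ 1)
    linarith
  set u := L / (x - 1) with hudef
  have hu0 : 0 < u := div_pos hL hx1
  have hu1 : u < 1 := (div_lt_one hx1).mpr hLlt
  have hLu : L = u * (x - 1) := by rw [hudef, div_mul_cancel₀ L hx1.ne']
  -- key lower bound on u
  have hub : 2 / (x + 1) ≤ u := by
    have hkey := log_lower_bound (le_of_lt hx)
    rw [hudef]
    rw [div_le_div_iff₀ (by linarith) hx1]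
    rw [div_le_iff₀ (by linarith : (0:ℝ) < x + 1)] at hkey
    linarith
  have hub' : 2 ≤ u * (x + 1) := by
    rw [div_le_iff₀ (by linarith : (0:ℝ) < x + 1)] at hub
    linarith
  -- rewrite the rpow
  have hrpow : x ^ (x / (x - 1)) = x * Real.exp u := by
    rw [Real.rpow_def_of_pos hx0]
    have : Real.log x * (x / (x - 1)) = L + u := by
      rw [hudef, hLdef]
      field_simp
      ring
    rw [this, Real.exp_add, Real.exp_log hx0]
  rw [hrpow]
  -- exp bound : exp (u - 1) ≤ 1 / (2 - u)
  have hexp : Real.exp (u - 1) ≤ 1 / (2 - u) := by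
    have h2u : (0:ℝ) < 2 - u := by linarith
    have h1 : 2 - u ≤ Real.exp (1 - u) := by
      have := Real.add_one_le_exp (1 - u)
      linarith
    have h2 : Real.exp (u - 1) = 1 / Real.exp (1 - u) := by
      rw [one_div, ← Real.exp_neg]
      ring_nf
    rw [h2]
    exact one_div_le_one_div_of_le h2u h1
  have heu : Real.exp u = Real.exp (u - 1) * Real.exp 1 := by
    rw [← Real.exp_add]; ring_nf
  -- main estimate : x * exp (u-1) ≤ ((x+1)/2)^2 * u
  have hmain : x * Real.exp (u - 1) ≤ ((x + 1) / 2) ^ 2 * u := by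
    have step1 : x * Real.exp (u - 1) ≤ x / (2 - u) := by
      rw [div_eq_mul_one_div]
      exact mul_le_mul_of_nonneg_left hexp (le_of_lt hx0)
    have step2 : x / (2 - u) ≤ ((x + 1) / 2) ^ 2 * u := by
      rw [div_le_iff₀ (by linarith : (0:ℝ) < 2 - u)]
      have hprod : 0 ≤ (u * (x + 1) - 2) * ((x - 1) + (x + 1) * (1 - u)) := by
        apply mul_nonneg
        · linarith
        · nlinarith
      nlinarith [hprod]
    linarith
  -- assemble
  rw [div_le_iff₀ (by positivity : (0:ℝ) < Real.exp 1 * L)]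
  rw [heu, hLu]
  calc (x - 1) * (x * (Real.exp (u - 1) * Real.exp 1))
      = (x * Real.exp (u - 1)) * ((x - 1) * Real.exp 1) := by ring
    _ ≤ (((x + 1) / 2) ^ 2 * u) * ((x - 1) * Real.exp 1) := by
        apply mul_le_mul_of_nonneg_right hmain
        positivity
    _ = ((x + 1) / 2) ^ 2 * (Real.exp 1 * (u * (x - 1))) := by ring
end

section
/- For every real x > 0 with x ≠ 1 and every real p with 0 < p < 1, the Wigner–Yanase–Dyson function satisfies W_p(x,1) ≤ K(x)^{p(1-p)} · L(x,1), where K is the Kantorovich constant. -/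
open Real
open Set

lemma nonneg_of_deriv {f f' : ℝ → ℝ} (hd : ∀ t, HasDerivAt f (f' t) t)
    (h0 : f 0 = 0) (hnn : ∀ t, 0 < t → 0 ≤ f' t) : ∀ y, 0 ≤ y → 0 ≤ f y := by
  have hmono : MonotoneOn f (Ici (0:ℝ)) := by
    apply monotoneOn_of_deriv_nonneg (convex_Ici 0)
    · exact fun t _ => (hd t).continuousAt.continuousWithinAt
    · exact fun t _ => (hd t).differentiableAt.differentiableWithinAt
    · intro t ht
      rw [interior_Ici, mem_Ioi] at ht
      rw [(hd t).deriv]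
      exact hnn t ht
  intro y hy
  calc (0:ℝ) = f 0 := h0.symm
  _ ≤ f y := hmono self_mem_Ici hy hy

-- L1 : sinh y ≤ y cosh y for y ≥ 0
lemma sinh_le_mul_cosh {y : ℝ} (hy : 0 ≤ y) : Real.sinh y ≤ y * Real.cosh y := by
  have := nonneg_of_deriv (f := fun t => t * Real.cosh t - Real.sinh t)
    (f' := fun t => t * Real.sinh t)
    (fun t => by
      have h1 : HasDerivAt (fun t : ℝ => t * Real.cosh t) (1 * Real.cosh t + t * Real.sinh t) t :=
        (hasDerivAt_id t).mul (Real.hasDerivAt_cosh t)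
      have := h1.sub (Real.hasDerivAt_sinh t)
      exact this.congr_deriv (by ring))
    (by simp)
    (fun t ht => mul_nonneg ht.le (Real.sinh_nonneg_iff.2 ht.le)) y hy
  linarith

-- L2 : 4 cosh y ≤ 4 + y^2 + y sinh y for y ≥ 0
lemma four_cosh_le {y : ℝ} (hy : 0 ≤ y) :
    4 * Real.cosh y ≤ 4 + y ^ 2 + y * Real.sinh y := by
  have h2 := nonneg_of_deriv (f := fun t => t * Real.sinh t + 2 - 2 * Real.cosh t)
    (f' := fun t => t * Real.cosh t + Real.sinh t - 2 * Real.sinh t)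
    (fun t => by
      have h1 : HasDerivAt (fun t : ℝ => t * Real.sinh t) (1 * Real.sinh t + t * Real.cosh t) t :=
        (hasDerivAt_id t).mul (Real.hasDerivAt_sinh t)
      have := (h1.add_const 2).sub ((Real.hasDerivAt_cosh t).const_mul 2)
      exact this.congr_deriv (by ring))
    (by simp)
    (fun t ht => by
      have h3 := sinh_le_mul_cosh ht.le
      show (0:ℝ) ≤ t * Real.cosh t + Real.sinh t - 2 * Real.sinh t
      linarith)
  have h1 := nonneg_of_deriv (f := fun t => t * Real.cosh t + 2 * t - 3 * Real.sinh t)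
    (f' := fun t => Real.cosh t + t * Real.sinh t + 2 - 3 * Real.cosh t)
    (fun t => by
      have h1 : HasDerivAt (fun t : ℝ => t * Real.cosh t) (1 * Real.cosh t + t * Real.sinh t) t :=
        (hasDerivAt_id t).mul (Real.hasDerivAt_cosh t)
      have := (h1.add ((hasDerivAt_id t).const_mul 2)).sub ((Real.hasDerivAt_sinh t).const_mul 3)
      exact this.congr_deriv (by ring))
    (by simp)
    (fun t ht => by
      have := h2 t ht.le
      show (0:ℝ) ≤ Real.cosh t + t * Real.sinh t + 2 - 3 * Real.cosh t
      nlinarith)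
  have h0 := nonneg_of_deriv (f := fun t => t * Real.sinh t + t ^ 2 + 4 - 4 * Real.cosh t)
    (f' := fun t => Real.sinh t + t * Real.cosh t + 2 * t - 4 * Real.sinh t)
    (fun t => by
      have hA : HasDerivAt (fun t : ℝ => t * Real.sinh t) (1 * Real.sinh t + t * Real.cosh t) t :=
        (hasDerivAt_id t).mul (Real.hasDerivAt_sinh t)
      have hB : HasDerivAt (fun t : ℝ => t ^ 2) (2 * t) t := by
        simpa using hasDerivAt_pow 2 t
      have := ((hA.add hB).add_const 4).sub ((Real.hasDerivAt_cosh t).const_mul 4)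
      exact this.congr_deriv (by ring))
    (by simp)
    (fun t ht => by
      have := h1 t ht.le
      show (0:ℝ) ≤ Real.sinh t + t * Real.cosh t + 2 * t - 4 * Real.sinh t
      nlinarith)
  have := h0 y hy
  linarith

-- key numerator inequality: 2 sinh t ^2 ≤ t^2 + t sinh t cosh t for t ≥ 0
lemma two_sinh_sq_le {t : ℝ} (ht : 0 ≤ t) :
    2 * Real.sinh t ^ 2 ≤ t ^ 2 + t * Real.sinh t * Real.cosh t := by
  have h := four_cosh_le (y := 2 * t) (by linarith)
  rw [Real.cosh_two_mul, Real.sinh_two_mul] at h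
  have hc := Real.cosh_sq_sub_sinh_sq t
  nlinarith [h, hc]

-- L3 : g(t) = (t cosh t - sinh t)/(t^2 sinh t) is antitone on (0, ∞)
lemma g_antitone : AntitoneOn
    (fun t => (t * Real.cosh t - Real.sinh t) / (t ^ 2 * Real.sinh t)) (Ioi (0:ℝ)) := by
  apply antitoneOn_of_deriv_nonpos (convex_Ioi 0)
  · apply ContinuousOn.div
    · fun_prop
    · fun_prop
    · intro t ht
      have ht' : (0:ℝ) < t := ht
      have hst : 0 < Real.sinh t := Real.sinh_pos_iff.2 ht'
      positivity
  · rw [interior_Ioi]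
    intro t ht
    have ht' : (0:ℝ) < t := ht
    have hst : 0 < Real.sinh t := Real.sinh_pos_iff.2 ht'
    have hD : t ^ 2 * Real.sinh t ≠ 0 := by positivity
    apply DifferentiableAt.differentiableWithinAt
    exact DifferentiableAt.div (by fun_prop) (by fun_prop) hD
  · rw [interior_Ioi]
    intro t ht
    have ht' : (0:ℝ) < t := ht
    have hs : 0 < Real.sinh t := Real.sinh_pos_iff.2 ht'
    have hD : t ^ 2 * Real.sinh t ≠ 0 := by positivity
    have hN : HasDerivAt (fun t : ℝ => t * Real.cosh t - Real.sinh t) (t * Real.sinh t) t := by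
      have h1 : HasDerivAt (fun t : ℝ => t * Real.cosh t) (1 * Real.cosh t + t * Real.sinh t) t :=
        (hasDerivAt_id t).mul (Real.hasDerivAt_cosh t)
      have := h1.sub (Real.hasDerivAt_sinh t)
      exact this.congr_deriv (by ring)
    have hDd : HasDerivAt (fun t : ℝ => t ^ 2 * Real.sinh t)
        (2 * t * Real.sinh t + t ^ 2 * Real.cosh t) t := by
      have h2 : HasDerivAt (fun t : ℝ => t ^ 2) (2 * t) t := by simpa using hasDerivAt_pow 2 t
      exact h2.mul (Real.hasDerivAt_sinh t)
    have hq : HasDerivAt (fun t => (t * Real.cosh t - Real.sinh t) / (t ^ 2 * Real.sinh t)) _ t :=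
      hN.div hDd hD
    rw [hq.deriv]
    apply div_nonpos_of_nonpos_of_nonneg _ (by positivity)
    have key := two_sinh_sq_le ht'.le
    have hmul := mul_le_mul_of_nonneg_left key ht'.le
    have hE : t * Real.sinh t * (t ^ 2 * Real.sinh t) -
        (t * Real.cosh t - Real.sinh t) * (2 * t * Real.sinh t + t ^ 2 * Real.cosh t) =
        2 * t * Real.sinh t ^ 2 - t ^ 3 - t ^ 2 * Real.sinh t * Real.cosh t := by
      linear_combination (-(t ^ 3)) * Real.cosh_sq_sub_sinh_sq t
    rw [hE]
    nlinarith [hmul]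

-- consequence: p^2 * delta t ≤ delta (p t) where delta s = s cosh s / sinh s - 1
lemma delta_scale {p t : ℝ} (hp0 : 0 < p) (hp1 : p ≤ 1) (ht : 0 < t) :
    p ^ 2 * (t * Real.cosh t / Real.sinh t - 1) ≤
      p * t * Real.cosh (p * t) / Real.sinh (p * t) - 1 := by
  have hpt : 0 < p * t := mul_pos hp0 ht
  have h := g_antitone (mem_Ioi.2 hpt) (mem_Ioi.2 ht) (mul_le_of_le_one_left ht.le hp1)
  simp only at h
  have hst : 0 < Real.sinh t := Real.sinh_pos_iff.2 ht
  have hspt : 0 < Real.sinh (p * t) := Real.sinh_pos_iff.2 hpt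
  rw [div_le_div_iff₀ (by positivity) (by positivity)] at h
  have key : p ^ 2 * (t * Real.cosh t - Real.sinh t) * Real.sinh (p * t) ≤
      (p * t * Real.cosh (p * t) - Real.sinh (p * t)) * Real.sinh t := by
    have h2 : p ^ 2 * (t * Real.cosh t - Real.sinh t) * Real.sinh (p * t) * t ^ 2 ≤
        (p * t * Real.cosh (p * t) - Real.sinh (p * t)) * Real.sinh t * t ^ 2 := by
      linarith [h]
    exact le_of_mul_le_mul_right h2 (by positivity)
  rw [div_sub_one hst.ne', div_sub_one hspt.ne', ← mul_div_assoc,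
    div_le_div_iff₀ hst hspt]
  linarith [key]

-- delta t ≤ t sinh t / cosh t
lemma delta_le {t : ℝ} (ht : 0 < t) :
    t * Real.cosh t / Real.sinh t - 1 ≤ t * Real.sinh t / Real.cosh t := by
  have hs : 0 < Real.sinh t := Real.sinh_pos_iff.2 ht
  have hc : 0 < Real.cosh t := Real.cosh_pos t
  rw [div_sub_one hs.ne', div_le_div_iff₀ hs hc]
  have h1 : t ≤ Real.sinh t := (Real.self_le_sinh_iff).2 ht.le
  have h2 : Real.sinh t ≤ Real.sinh t * Real.cosh t := by
    nlinarith [Real.one_le_cosh t]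
  nlinarith [Real.cosh_sq_sub_sinh_sq t]

-- the star inequality
lemma star_ineq {p q t : ℝ} (hp0 : 0 < p) (hq0 : 0 < q) (hpq : p + q = 1) (ht : 0 < t) :
    (t * Real.cosh t / Real.sinh t - 1)
      - (p * t * Real.cosh (p * t) / Real.sinh (p * t) - 1)
      - (q * t * Real.cosh (q * t) / Real.sinh (q * t) - 1)
      ≤ 2 * (p * q) * (t * Real.sinh t / Real.cosh t) := by
  have hdp := delta_scale hp0 (by linarith) ht
  have hdq := delta_scale hq0 (by linarith) ht
  have hdl := delta_le ht
  have hpq2 : 1 - p ^ 2 - q ^ 2 = 2 * (p * q) := by nlinarith [hpq]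
  calc (t * Real.cosh t / Real.sinh t - 1)
      - (p * t * Real.cosh (p * t) / Real.sinh (p * t) - 1)
      - (q * t * Real.cosh (q * t) / Real.sinh (q * t) - 1)
      ≤ (1 - p ^ 2 - q ^ 2) * (t * Real.cosh t / Real.sinh t - 1) := by linarith [hdp, hdq]
    _ = 2 * (p * q) * (t * Real.cosh t / Real.sinh t - 1) := by rw [hpq2]
    _ ≤ 2 * (p * q) * (t * Real.sinh t / Real.cosh t) :=
        mul_le_mul_of_nonneg_left hdl (by positivity)

-- the function F and its derivative
lemma F_hasDeriv (p q : ℝ) (hp : 0 < p) (hq : 0 < q) {t : ℝ} (ht : 0 < t) :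
    HasDerivAt (fun t => 2 * (p * q) * Real.log (Real.cosh t) + Real.log (Real.sinh (p * t))
      + Real.log (Real.sinh (q * t)) - Real.log (Real.sinh t) - Real.log (p * q * t))
    (2 * (p * q) * (Real.sinh t / Real.cosh t) + p * Real.cosh (p * t) / Real.sinh (p * t)
      + q * Real.cosh (q * t) / Real.sinh (q * t) - Real.cosh t / Real.sinh t - 1 / t) t := by
  have hst : 0 < Real.sinh t := Real.sinh_pos_iff.2 ht
  have hspt : 0 < Real.sinh (p * t) := Real.sinh_pos_iff.2 (mul_pos hp ht)
  have hsqt : 0 < Real.sinh (q * t) := Real.sinh_pos_iff.2 (mul_pos hq ht)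
  have hct : 0 < Real.cosh t := Real.cosh_pos t
  have h1 : HasDerivAt (fun t : ℝ => Real.log (Real.cosh t)) (Real.sinh t / Real.cosh t) t :=
    (Real.hasDerivAt_cosh t).log hct.ne'
  have hip : HasDerivAt (fun y : ℝ => p * y) p t := by
    simpa using (hasDerivAt_id t).const_mul p
  have hiq : HasDerivAt (fun y : ℝ => q * y) q t := by
    simpa using (hasDerivAt_id t).const_mul q
  have hipq : HasDerivAt (fun y : ℝ => p * q * y) (p * q) t := by
    simpa using (hasDerivAt_id t).const_mul (p * q)
  have h2 : HasDerivAt (fun t : ℝ => Real.log (Real.sinh (p * t)))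
      (Real.cosh (p * t) * p / Real.sinh (p * t)) t :=
    (hip.sinh).log hspt.ne'
  have h3 : HasDerivAt (fun t : ℝ => Real.log (Real.sinh (q * t)))
      (Real.cosh (q * t) * q / Real.sinh (q * t)) t :=
    (hiq.sinh).log hsqt.ne'
  have h4 : HasDerivAt (fun t : ℝ => Real.log (Real.sinh t))
      (Real.cosh t / Real.sinh t) t := (Real.hasDerivAt_sinh t).log hst.ne'
  have h5 : HasDerivAt (fun t : ℝ => Real.log (p * q * t))
      ((p * q) / (p * q * t)) t := hipq.log (by positivity)
  have := ((((h1.const_mul (2 * (p * q))).add h2).add h3).sub h4).sub h5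
  refine this.congr_deriv ?_
  have hpq : (p * q) / (p * q * t) = 1 / t := by
    field_simp
  rw [hpq]
  ring

-- F is nonnegative on (0, ∞)
lemma F_nonneg (p q : ℝ) (hp : 0 < p) (hq : 0 < q) (hpq : p + q = 1) {u : ℝ} (hu : 0 < u) :
    0 ≤ 2 * (p * q) * Real.log (Real.cosh u) + Real.log (Real.sinh (p * u))
      + Real.log (Real.sinh (q * u)) - Real.log (Real.sinh u) - Real.log (p * q * u) := by
  set F : ℝ → ℝ := fun t => 2 * (p * q) * Real.log (Real.cosh t) + Real.log (Real.sinh (p * t))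
      + Real.log (Real.sinh (q * t)) - Real.log (Real.sinh t) - Real.log (p * q * t) with hF
  -- derivative nonneg on (0, ∞)
  have hderiv : ∀ t : ℝ, 0 < t → 0 ≤ 2 * (p * q) * (Real.sinh t / Real.cosh t)
      + p * Real.cosh (p * t) / Real.sinh (p * t)
      + q * Real.cosh (q * t) / Real.sinh (q * t) - Real.cosh t / Real.sinh t - 1 / t := by
    intro t ht
    have hst : 0 < Real.sinh t := Real.sinh_pos_iff.2 ht
    have hspt : 0 < Real.sinh (p * t) := Real.sinh_pos_iff.2 (mul_pos hp ht)
    have hsqt : 0 < Real.sinh (q * t) := Real.sinh_pos_iff.2 (mul_pos hq ht)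
    have hct : 0 < Real.cosh t := Real.cosh_pos t
    have hstar := star_ineq hp hq hpq ht
    have hmul : 0 ≤ t * (2 * (p * q) * (Real.sinh t / Real.cosh t)
        + p * Real.cosh (p * t) / Real.sinh (p * t)
        + q * Real.cosh (q * t) / Real.sinh (q * t) - Real.cosh t / Real.sinh t - 1 / t) := by
      have he : t * (2 * (p * q) * (Real.sinh t / Real.cosh t)
          + p * Real.cosh (p * t) / Real.sinh (p * t)
          + q * Real.cosh (q * t) / Real.sinh (q * t) - Real.cosh t / Real.sinh t - 1 / t)
          = 2 * (p * q) * (t * Real.sinh t / Real.cosh t)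
            + (p * t * Real.cosh (p * t) / Real.sinh (p * t) - 1)
            + (q * t * Real.cosh (q * t) / Real.sinh (q * t) - 1)
            - (t * Real.cosh t / Real.sinh t - 1) := by
        field_simp
        ring
      rw [he]
      linarith [hstar]
    nlinarith [hmul, ht]
  -- monotone on (0, ∞)
  have hmono : MonotoneOn F (Ioi (0:ℝ)) := by
    apply monotoneOn_of_deriv_nonneg (convex_Ioi 0)
    · exact fun t ht => (F_hasDeriv p q hp hq (mem_Ioi.1 ht)).continuousAt.continuousWithinAt
    · rw [interior_Ioi]
      exact fun t ht =>
        (F_hasDeriv p q hp hq (mem_Ioi.1 ht)).differentiableAt.differentiableWithinAt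
    · rw [interior_Ioi]
      intro t ht
      rw [(F_hasDeriv p q hp hq (mem_Ioi.1 ht)).deriv]
      exact hderiv t (mem_Ioi.1 ht)
  -- limit of F at 0+ is 0
  have hslope : Filter.Tendsto (fun s => Real.sinh s / s) (nhdsWithin 0 {(0:ℝ)}ᶜ) (nhds 1) := by
    have h := Real.hasDerivAt_sinh 0
    rw [hasDerivAt_iff_tendsto_slope] at h
    have hs : slope Real.sinh 0 = fun s => Real.sinh s / s := by
      funext s
      rw [slope_def_field]
      simp [div_eq_mul_inv]
    rw [hs] at h
    simpa using h
  have hcomp : ∀ c : ℝ, 0 < c → Filter.Tendsto (fun t => Real.sinh (c * t) / (c * t))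
      (nhdsWithin 0 (Ioi 0)) (nhds 1) := by
    intro c hc
    apply hslope.comp
    apply Filter.Tendsto.mono_right _ (nhdsWithin_mono 0 (by
      intro s hs
      simp only [mem_compl_iff, mem_singleton_iff]
      exact ne_of_gt hs))
    apply tendsto_nhdsWithin_of_tendsto_nhds_of_eventually_within
    · have : Filter.Tendsto (fun t : ℝ => c * t) (nhds 0) (nhds 0) := by
        simpa using (continuous_mul_left c).tendsto (0:ℝ)
      exact this.mono_left nhdsWithin_le_nhds
    · filter_upwards [self_mem_nhdsWithin] with t ht
      exact mul_pos hc ht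
  have hlim : Filter.Tendsto F (nhdsWithin 0 (Ioi 0)) (nhds 0) := by
    have hG : ∀ t ∈ Ioi (0:ℝ), F t = 2 * (p * q) * Real.log (Real.cosh t)
        + Real.log (Real.sinh (p * t) / (p * t)) + Real.log (Real.sinh (q * t) / (q * t))
        - Real.log (Real.sinh t / t) := by
      intro t ht
      have ht' : (0:ℝ) < t := ht
      have hst : 0 < Real.sinh t := Real.sinh_pos_iff.2 ht'
      have hspt : 0 < Real.sinh (p * t) := Real.sinh_pos_iff.2 (mul_pos hp ht')
      have hsqt : 0 < Real.sinh (q * t) := Real.sinh_pos_iff.2 (mul_pos hq ht')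
      simp only [hF]
      rw [Real.log_div hspt.ne' (by positivity), Real.log_div hsqt.ne' (by positivity),
        Real.log_div hst.ne' ht'.ne', Real.log_mul (mul_pos hp hq).ne' ht'.ne',
        Real.log_mul hp.ne' hq.ne', Real.log_mul hp.ne' ht'.ne',
        Real.log_mul hq.ne' ht'.ne']
      ring
    have hcosh : Filter.Tendsto (fun t => 2 * (p * q) * Real.log (Real.cosh t))
        (nhdsWithin 0 (Ioi 0)) (nhds 0) := by
      have h1 : Filter.Tendsto (fun t : ℝ => Real.log (Real.cosh t)) (nhds 0) (nhds 0) := by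
        have hca : ContinuousAt (fun t : ℝ => Real.log (Real.cosh t)) 0 :=
          Real.continuous_cosh.continuousAt.log (Real.cosh_pos 0).ne'
        simpa using hca.tendsto
      have := h1.const_mul (2 * (p * q))
      simpa using this.mono_left nhdsWithin_le_nhds
    have hlog : ∀ c : ℝ, 0 < c → Filter.Tendsto (fun t => Real.log (Real.sinh (c * t) / (c * t)))
        (nhdsWithin 0 (Ioi 0)) (nhds 0) := by
      intro c hc
      have := (Real.continuousAt_log one_ne_zero).tendsto.comp (hcomp c hc)
      simpa [Function.comp_def] using this
    have hlog1 : Filter.Tendsto (fun t => Real.log (Real.sinh t / t))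
        (nhdsWithin 0 (Ioi 0)) (nhds 0) := by
      have := hlog 1 one_pos
      simpa using this
    have htot := ((hcosh.add (hlog p hp)).add (hlog q hq)).sub hlog1
    rw [show (0:ℝ) + 0 + 0 - 0 = 0 by ring] at htot
    apply htot.congr'
    filter_upwards [self_mem_nhdsWithin] with t ht
    exact (hG t ht).symm
  -- conclude
  have hev : ∀ᶠ t in nhdsWithin 0 (Ioi (0:ℝ)), F t ≤ F u := by
    filter_upwards [Ioo_mem_nhdsGT_of_mem (left_mem_Ico.2 hu)] with t ht
    exact hmono (mem_Ioi.2 ht.1) (mem_Ioi.2 hu) ht.2.le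
  have := le_of_tendsto hlim hev
  simpa [hF] using this

-- core hyperbolic inequality
lemma core_ineq {p q u : ℝ} (hp : 0 < p) (hq : 0 < q) (hpq : p + q = 1) (hu : 0 < u) :
    p * q * u * Real.sinh u ≤
      Real.cosh u ^ (2 * (p * q)) * (Real.sinh (p * u) * Real.sinh (q * u)) := by
  have hF := F_nonneg p q hp hq hpq hu
  have hsu : 0 < Real.sinh u := Real.sinh_pos_iff.2 hu
  have hspu : 0 < Real.sinh (p * u) := Real.sinh_pos_iff.2 (mul_pos hp hu)
  have hsqu : 0 < Real.sinh (q * u) := Real.sinh_pos_iff.2 (mul_pos hq hu)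
  have hcu : 0 < Real.cosh u := Real.cosh_pos u
  have hA : 0 < Real.cosh u ^ (2 * (p * q)) * (Real.sinh (p * u) * Real.sinh (q * u)) := by
    positivity
  have hB : 0 < p * q * u * Real.sinh u := by positivity
  rw [← Real.log_le_log_iff hB hA]
  rw [Real.log_mul (by positivity) hsu.ne',
    Real.log_mul (by positivity : (Real.cosh u ^ (2 * (p * q)) : ℝ) ≠ 0) (by positivity),
    Real.log_rpow hcu, Real.log_mul hspu.ne' hsqu.ne']
  linarith [hF]

-- exp/sinh/cosh translation helpers
lemma two_exp_sinh (a : ℝ) : 2 * Real.exp a * Real.sinh a = Real.exp (2 * a) - 1 := by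
  rw [Real.sinh_eq, Real.exp_neg, show (2:ℝ) * a = a + a from two_mul a, Real.exp_add]
  field_simp

lemma two_exp_cosh (a : ℝ) : 2 * Real.exp a * Real.cosh a = Real.exp (2 * a) + 1 := by
  rw [Real.cosh_eq, Real.exp_neg, show (2:ℝ) * a = a + a from two_mul a, Real.exp_add]
  field_simp

-- product inequality for x > 1
lemma prod_ineq_gt {x p q : ℝ} (hx : 1 < x) (hp : 0 < p) (hq : 0 < q) (hpq : p + q = 1) :
    p * q * (x - 1) * Real.log x ≤
      ((x + 1) ^ 2 / (4 * x)) ^ (p * q) * ((x ^ p - 1) * (x ^ q - 1)) := by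
  have hx0 : 0 < x := lt_trans one_pos hx
  have hlx : 0 < Real.log x := Real.log_pos hx
  set u : ℝ := Real.log x / 2 with hu
  have hu0 : 0 < u := by positivity
  have hxu : x = Real.exp (2 * u) := by
    rw [hu]; rw [show 2 * (Real.log x / 2) = Real.log x by ring, Real.exp_log hx0]
  have hxm : x - 1 = 2 * Real.exp u * Real.sinh u := by rw [two_exp_sinh, ← hxu]
  have hxp1 : x + 1 = 2 * Real.exp u * Real.cosh u := by rw [two_exp_cosh, ← hxu]
  have hxp : x ^ p - 1 = 2 * Real.exp (p * u) * Real.sinh (p * u) := by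
    rw [two_exp_sinh, Real.rpow_def_of_pos hx0]
    rw [show 2 * (p * u) = p * (2 * u) by ring]
    congr 2
    rw [hu]; ring
  have hxq : x ^ q - 1 = 2 * Real.exp (q * u) * Real.sinh (q * u) := by
    rw [two_exp_sinh, Real.rpow_def_of_pos hx0]
    rw [show 2 * (q * u) = q * (2 * u) by ring]
    congr 2
    rw [hu]; ring
  have hlogx : Real.log x = 2 * u := by rw [hu]; ring
  have hK : (x + 1) ^ 2 / (4 * x) = Real.cosh u ^ (2:ℕ) := by
    rw [hxp1, hxu]
    rw [show (2:ℝ) * u = u + u by ring, Real.exp_add]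
    field_simp
    ring
  have hKpq : ((x + 1) ^ 2 / (4 * x)) ^ (p * q) = Real.cosh u ^ (2 * (p * q)) := by
    rw [hK, ← Real.rpow_natCast (Real.cosh u) 2, ← Real.rpow_mul (Real.cosh_pos u).le]
    norm_num
  have hexp : Real.exp (p * u) * Real.exp (q * u) = Real.exp u := by
    rw [← Real.exp_add, show p * u + q * u = (p + q) * u by ring, hpq, one_mul]
  have hcore := core_ineq hp hq hpq hu0
  have h4 := mul_le_mul_of_nonneg_left hcore (by positivity : (0:ℝ) ≤ 4 * Real.exp u)
  calc p * q * (x - 1) * Real.log x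
      = 4 * Real.exp u * (p * q * u * Real.sinh u) := by rw [hxm, hlogx]; ring
    _ ≤ 4 * Real.exp u * (Real.cosh u ^ (2 * (p * q)) *
          (Real.sinh (p * u) * Real.sinh (q * u))) := h4
    _ = ((x + 1) ^ 2 / (4 * x)) ^ (p * q) * ((x ^ p - 1) * (x ^ q - 1)) := by
        rw [hKpq, hxp, hxq]
        rw [show 2 * Real.exp (p * u) * Real.sinh (p * u) * (2 * Real.exp (q * u) * Real.sinh (q * u))
            = 4 * (Real.exp (p * u) * Real.exp (q * u)) * (Real.sinh (p * u) * Real.sinh (q * u)) by ring,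
          hexp]
        ring

-- product inequality for all x ≠ 1
lemma prod_ineq {x p q : ℝ} (hx0 : 0 < x) (hx1 : x ≠ 1) (hp : 0 < p) (hq : 0 < q)
    (hpq : p + q = 1) :
    p * q * (x - 1) * Real.log x ≤
      ((x + 1) ^ 2 / (4 * x)) ^ (p * q) * ((x ^ p - 1) * (x ^ q - 1)) := by
  rcases lt_or_gt_of_ne hx1 with hlt | hgt
  · -- 0 < x < 1 : apply to x⁻¹
    have hy : 1 < x⁻¹ := (one_lt_inv₀ hx0).2 hlt
    have h := prod_ineq_gt hy hp hq hpq
    have hxn : x ≠ 0 := hx0.ne'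
    have hKeq : ((x⁻¹ + 1) ^ 2 / (4 * x⁻¹)) = ((x + 1) ^ 2 / (4 * x)) := by
      field_simp
      ring
    rw [hKeq] at h
    have hxp0 : (0:ℝ) < x ^ p := Real.rpow_pos_of_pos hx0 p
    have hxq0 : (0:ℝ) < x ^ q := Real.rpow_pos_of_pos hx0 q
    have hxpq : x ^ p * x ^ q = x := by
      rw [← Real.rpow_add hx0, hpq, Real.rpow_one]
    have e1 : x * (p * q * (x⁻¹ - 1) * Real.log x⁻¹) = p * q * (x - 1) * Real.log x := by
      rw [Real.log_inv]
      field_simp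
      ring
    have fact : ∀ a b k : ℝ, a ≠ 0 → b ≠ 0 →
        (a * b) * (k * ((a⁻¹ - 1) * (b⁻¹ - 1))) = k * ((a - 1) * (b - 1)) := by
      intro a b k ha hb
      have hab : (a * b) * ((a⁻¹ - 1) * (b⁻¹ - 1)) = (a - 1) * (b - 1) := by
        field_simp
        ring
      calc (a * b) * (k * ((a⁻¹ - 1) * (b⁻¹ - 1)))
          = k * ((a * b) * ((a⁻¹ - 1) * (b⁻¹ - 1))) := by ring
        _ = k * ((a - 1) * (b - 1)) := by rw [hab]
    have e2 : x * (((x + 1) ^ 2 / (4 * x)) ^ (p * q) * ((x⁻¹ ^ p - 1) * (x⁻¹ ^ q - 1)))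
        = ((x + 1) ^ 2 / (4 * x)) ^ (p * q) * ((x ^ p - 1) * (x ^ q - 1)) := by
      calc x * (((x + 1) ^ 2 / (4 * x)) ^ (p * q) * ((x⁻¹ ^ p - 1) * (x⁻¹ ^ q - 1)))
          = (x ^ p * x ^ q) * (((x + 1) ^ 2 / (4 * x)) ^ (p * q) *
              (((x ^ p)⁻¹ - 1) * ((x ^ q)⁻¹ - 1))) := by
            rw [Real.inv_rpow hx0.le, Real.inv_rpow hx0.le, hxpq]
        _ = ((x + 1) ^ 2 / (4 * x)) ^ (p * q) * ((x ^ p - 1) * (x ^ q - 1)) :=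
            fact _ _ _ hxp0.ne' hxq0.ne'
    calc p * q * (x - 1) * Real.log x
        = x * (p * q * (x⁻¹ - 1) * Real.log x⁻¹) := e1.symm
      _ ≤ x * (((x + 1) ^ 2 / (4 * x)) ^ (p * q) * ((x⁻¹ ^ p - 1) * (x⁻¹ ^ q - 1))) :=
          mul_le_mul_of_nonneg_left h hx0.le
      _ = ((x + 1) ^ 2 / (4 * x)) ^ (p * q) * ((x ^ p - 1) * (x ^ q - 1)) := e2
  · exact prod_ineq_gt hgt hp hq hpq


theorem wyd_le_kantorovich_log_mean (x p : ℝ) (hx : 0 < x) (hx1 : x ≠ 1)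
    (hp0 : 0 < p) (hp1 : p < 1) :
    p * (1 - p) * (x - 1) ^ 2 / ((x ^ p - 1) * (x ^ (1 - p) - 1)) ≤
      ((x + 1) ^ 2 / (4 * x)) ^ (p * (1 - p)) * ((x - 1) / Real.log x) := by
  have hq : 0 < 1 - p := by linarith
  have hpq : p + (1 - p) = 1 := by ring
  have h := prod_ineq hx hx1 hp0 hq hpq
  have hD : 0 < (x ^ p - 1) * (x ^ (1 - p) - 1) := by
    rcases lt_or_gt_of_ne hx1 with hlt | hgt
    · have h1 : x ^ p < 1 := Real.rpow_lt_one hx.le hlt hp0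
      have h2 : x ^ (1 - p) < 1 := Real.rpow_lt_one hx.le hlt hq
      exact mul_pos_of_neg_of_neg (by linarith) (by linarith)
    · have h1 : 1 < x ^ p := Real.one_lt_rpow_iff_of_pos hx |>.2 (Or.inl ⟨hgt, hp0⟩)
      have h2 : 1 < x ^ (1 - p) := Real.one_lt_rpow_iff_of_pos hx |>.2 (Or.inl ⟨hgt, hq⟩)
      exact mul_pos (by linarith) (by linarith)
  have hlog : Real.log x ≠ 0 := by
    rcases lt_or_gt_of_ne hx1 with hlt | hgt
    · exact (Real.log_neg hx hlt).ne
    · exact (Real.log_pos hgt).ne'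
  have hL : 0 < (x - 1) / Real.log x := by
    rcases lt_or_gt_of_ne hx1 with hlt | hgt
    · exact div_pos_of_neg_of_neg (by linarith) (Real.log_neg hx hlt)
    · exact div_pos (by linarith) (Real.log_pos hgt)
  rw [div_le_iff₀ hD]
  have h2 := mul_le_mul_of_nonneg_right h hL.le
  have e : p * (1 - p) * (x - 1) * Real.log x * ((x - 1) / Real.log x)
      = p * (1 - p) * (x - 1) ^ 2 := by
    field_simp
  rw [e] at h2
  calc p * (1 - p) * (x - 1) ^ 2 ≤ ((x + 1) ^ 2 / (4 * x)) ^ (p * (1 - p)) *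
        ((x ^ p - 1) * (x ^ (1 - p) - 1)) * ((x - 1) / Real.log x) := h2
    _ = ((x + 1) ^ 2 / (4 * x)) ^ (p * (1 - p)) * ((x - 1) / Real.log x) *
        ((x ^ p - 1) * (x ^ (1 - p) - 1)) := by ring
end

section
/- For every real x > 0 with x ≠ 1 and every real p with 0 < p ≤ 1/2, one has W_p(x,1) ≥ Â_p(x,1). -/
open Real

lemma sinh_convex : ConvexOn ℝ (Set.Ici (0:ℝ)) Real.sinh := by
  apply convexOn_of_deriv2_nonneg (convex_Ici 0)
  · exact Real.continuous_sinh.continuousOn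
  · exact Real.differentiable_sinh.differentiableOn
  · rw [Real.deriv_sinh]; exact Real.differentiable_cosh.differentiableOn
  · intro y hy
    have h2 : deriv^[2] Real.sinh = Real.sinh := by
      funext t
      simp [Function.iterate_succ_apply', Real.deriv_sinh, Real.deriv_cosh]
    rw [h2]
    rw [interior_Ici] at hy
    exact Real.sinh_nonneg_iff.2 (le_of_lt hy)

lemma sinh_mul_le {r L : ℝ} (hr0 : 0 ≤ r) (hr1 : r ≤ 1) (hL : 0 ≤ L) :
    Real.sinh (r * L) ≤ r * Real.sinh L := by
  have h := sinh_convex.2 Set.self_mem_Ici (Set.mem_Ici.2 hL)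
    (by linarith : (0:ℝ) ≤ 1 - r) hr0 (by ring)
  simpa using h

lemma key_sign (x p : ℝ) (hx : 0 < x) (hp0 : 0 < p) (hp1 : p ≤ 1 / 2) :
    0 ≤ (x - 1) * ((1 - 2 * p) * (x - 1) - (x ^ (1 - p) - x ^ p)) := by
  set r : ℝ := 1 - 2 * p with hr
  have hr0 : 0 ≤ r := by simp [hr]; linarith
  have hr1 : r ≤ 1 := by simp [hr]; linarith
  set L : ℝ := Real.log x / 2 with hL
  have hexp : Real.exp L * Real.exp L = x := by
    rw [← Real.exp_add, show L + L = Real.log x by rw [hL]; ring, Real.exp_log hx]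
  have hepos := Real.exp_pos L
  have h1 : x - 1 = 2 * Real.exp L * Real.sinh L := by
    rw [Real.sinh_eq, Real.exp_neg]
    field_simp
    rw [← hexp]; ring
  have hxp : x ^ p = Real.exp ((1 - r) * L) := by
    rw [Real.rpow_def_of_pos hx]
    congr 1
    rw [hr, hL]; ring
  have hxq : x ^ (1 - p) = Real.exp ((1 + r) * L) := by
    rw [Real.rpow_def_of_pos hx]
    congr 1
    rw [hr, hL]; ring
  have h2 : x ^ (1 - p) - x ^ p = 2 * Real.exp L * Real.sinh (r * L) := by
    rw [hxp, hxq, Real.sinh_eq, Real.exp_neg,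
      show (1 + r) * L = L + r * L by ring, show (1 - r) * L = L - r * L by ring,
      Real.exp_add, Real.exp_sub]
    field_simp
  rw [h1, h2]
  rcases le_or_gt 0 L with hL0 | hL0
  · have hs : 0 ≤ Real.sinh L := Real.sinh_nonneg_iff.2 hL0
    have hk : Real.sinh (r * L) ≤ r * Real.sinh L := sinh_mul_le hr0 hr1 hL0
    nlinarith [mul_nonneg hs (sub_nonneg.2 hk), mul_pos hepos hepos]
  · have hs : Real.sinh L ≤ 0 := Real.sinh_nonpos_iff.2 hL0.le
    have hk : Real.sinh (r * (-L)) ≤ r * Real.sinh (-L) := sinh_mul_le hr0 hr1 (by linarith)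
    rw [show r * -L = -(r * L) by ring, Real.sinh_neg, Real.sinh_neg] at hk
    have hprod : 0 ≤ (-Real.sinh L) * (Real.sinh (r * L) - r * Real.sinh L) :=
      mul_nonneg (by linarith) (by linarith)
    nlinarith [hprod, mul_pos hepos hepos]

theorem wyd_ge_hatA (x p : ℝ) (hx : 0 < x) (hx1 : x ≠ 1) (hp0 : 0 < p) (hp1 : p ≤ 1 / 2) :
    p * (1 - p) * (x - 1) ^ 2 / ((x ^ p - 1) * (x ^ (1 - p) - 1)) ≥
      p * (x ^ p + 1) * (x - 1) / (2 * (x ^ p - 1)) := by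
  have key := key_sign x p hx hp0 hp1
  have hab : x ^ p * x ^ (1 - p) = x := by
    rw [← Real.rpow_add hx]
    norm_num
  have hD : 0 < (x ^ p - 1) * (x ^ (1 - p) - 1) := by
    rcases hx1.lt_or_gt with h | h
    · have ha := Real.rpow_lt_one hx.le h hp0
      have hb := Real.rpow_lt_one hx.le h (by linarith : (0:ℝ) < 1 - p)
      nlinarith
    · have ha := (Real.one_lt_rpow_iff_of_pos hx).2 (Or.inl ⟨h, hp0⟩)
      have hb := (Real.one_lt_rpow_iff_of_pos hx (y := 1 - p)).2 (Or.inl ⟨h, by linarith⟩)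
      nlinarith
  set a : ℝ := x ^ p with hadef
  set b : ℝ := x ^ (1 - p) with hbdef
  rw [← hab] at key ⊢
  have ha1 : a - 1 ≠ 0 := left_ne_zero_of_mul hD.ne'
  have hb1 : b - 1 ≠ 0 := right_ne_zero_of_mul hD.ne'
  have ident : p * (1 - p) * (a * b - 1) ^ 2 / ((a - 1) * (b - 1)) -
      p * (a + 1) * (a * b - 1) / (2 * (a - 1)) =
      p * ((a * b - 1) * ((1 - 2 * p) * (a * b - 1) - (b - a))) / (2 * ((a - 1) * (b - 1))) := by
    field_simp
    ring
  rw [ge_iff_le, ← sub_nonneg, ident]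
  exact div_nonneg (mul_nonneg hp0.le key) (by linarith)
end

section
/- For every real x > 0 with x ≠ 1 and every real p with p < 0 or 1/2 ≤ p, and p ≠ 0, p ≠ 1, one has W_p(x,1) ≤ Â_p(x,1). -/
open Real Set

lemma convexOn_sinh_Ici : ConvexOn ℝ (Ici (0:ℝ)) Real.sinh := by
  apply convexOn_of_deriv2_nonneg (convex_Ici 0) Real.continuous_sinh.continuousOn
    Real.differentiable_sinh.differentiableOn
  · rw [Real.deriv_sinh]
    exact Real.differentiable_cosh.differentiableOn
  · intro y hy
    rw [interior_Ici, mem_Ioi] at hy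
    simp only [Function.iterate_succ, Function.iterate_zero, Function.comp_apply, id_eq,
      Real.deriv_sinh, Real.deriv_cosh]
    exact (Real.sinh_pos_iff.mpr hy).le

lemma sinh_smul_le {l u : ℝ} (hl0 : 0 ≤ l) (hl1 : l ≤ 1) (hu : 0 ≤ u) :
    Real.sinh (l * u) ≤ l * Real.sinh u := by
  have h := convexOn_sinh_Ici.2 (mem_Ici.mpr hu) self_mem_Ici hl0
    (by linarith : (0:ℝ) ≤ 1 - l) (by ring)
  simpa [Real.sinh_zero, smul_eq_mul] using h

lemma main_le {c : ℝ} (hc : 1 ≤ c ∨ (-1 ≤ c ∧ c ≤ 0)) {u : ℝ} (hu : 0 ≤ u) :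
    c * Real.sinh u ≤ Real.sinh (c * u) := by
  rcases hc with hc | ⟨hc1, hc2⟩
  · have hc0 : (0:ℝ) < c := lt_of_lt_of_le one_pos hc
    have h1 : Real.sinh u ≤ 1 / c * Real.sinh (c * u) := by
      have := sinh_smul_le (show (0:ℝ) ≤ 1 / c by positivity)
        (show (1:ℝ) / c ≤ 1 by rw [div_le_one hc0]; exact hc)
        (show (0:ℝ) ≤ c * u by positivity)
      rwa [show 1 / c * (c * u) = u by field_simp] at this
    calc c * Real.sinh u ≤ c * (1 / c * Real.sinh (c * u)) :=
          mul_le_mul_of_nonneg_left h1 hc0.le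
      _ = Real.sinh (c * u) := by field_simp
  · have := sinh_smul_le (show (0:ℝ) ≤ -c by linarith) (show -c ≤ 1 by linarith) hu
    rw [show -c * u = -(c * u) by ring, Real.sinh_neg] at this
    linarith

lemma main_ge {c : ℝ} (hc : 1 ≤ c ∨ (-1 ≤ c ∧ c ≤ 0)) {u : ℝ} (hu : u ≤ 0) :
    Real.sinh (c * u) ≤ c * Real.sinh u := by
  have := main_le hc (show (0:ℝ) ≤ -u by linarith)
  rw [show c * -u = -(c * u) by ring, Real.sinh_neg, Real.sinh_neg] at this
  linarith

lemma main_le_neg {c : ℝ} (hc : c ≤ -1) {u : ℝ} (hu : 0 ≤ u) :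
    Real.sinh (c * u) ≤ c * Real.sinh u := by
  have := main_le (Or.inl (show (1:ℝ) ≤ -c by linarith)) hu
  rw [show -c * u = -(c * u) by ring, Real.sinh_neg] at this
  linarith

lemma main_ge_neg {c : ℝ} (hc : c ≤ -1) {u : ℝ} (hu : u ≤ 0) :
    c * Real.sinh u ≤ Real.sinh (c * u) := by
  have := main_le_neg hc (show (0:ℝ) ≤ -u by linarith)
  rw [show c * -u = -(c * u) by ring, Real.sinh_neg, Real.sinh_neg] at this
  linarith

lemma core (p u : ℝ) (hp : p < 0 ∨ 1 / 2 ≤ p) (hp0 : p ≠ 0) (hp1 : p ≠ 1) (hu : u ≠ 0) :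
    (1 - p) * Real.sinh u / Real.sinh ((1 - p) * u) ≤ Real.cosh (p * u) := by
  have hq0 : 1 - p ≠ 0 := sub_ne_zero.mpr (Ne.symm hp1)
  have hprod : 2 * (Real.cosh (p * u) * Real.sinh ((1 - p) * u)) =
      Real.sinh u + Real.sinh ((1 - 2 * p) * u) := by
    have h1 := Real.sinh_add ((1 - p) * u) (p * u)
    have h2 := Real.sinh_sub ((1 - p) * u) (p * u)
    rw [show (1 - p) * u + p * u = u by ring] at h1
    rw [show (1 - p) * u - p * u = (1 - 2 * p) * u by ring] at h2
    linarith
  rcases lt_or_gt_of_ne hu with hun | hup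
  · -- u < 0
    rcases lt_trichotomy p 0 with hpneg | hpz | hppos
    · -- p < 0 : q = 1-p > 1 > 0, u < 0 so sinh(qu) < 0
      have hs : Real.sinh ((1 - p) * u) < 0 := by
        rw [← Real.sinh_zero]
        exact Real.sinh_lt_sinh.mpr (by nlinarith)
      rw [div_le_iff_of_neg hs]
      have := main_ge (Or.inl (show (1:ℝ) ≤ 1 - 2 * p by linarith)) hun.le
      nlinarith
    · exact absurd hpz hp0
    · -- p > 0 hence 1/2 ≤ p
      have hp2 : 1 / 2 ≤ p := hp.resolve_left (not_lt.mpr hppos.le)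
      rcases lt_trichotomy p 1 with hplt | hpe | hpgt
      · -- 1/2 ≤ p < 1 : q ∈ (0,1/2], u<0 so sinh(qu)<0, c = 1-2p ∈ (-1,0]
        have hs : Real.sinh ((1 - p) * u) < 0 := by
          rw [← Real.sinh_zero]
          exact Real.sinh_lt_sinh.mpr (by nlinarith)
        rw [div_le_iff_of_neg hs]
        have := main_ge (c := 1 - 2 * p) (Or.inr ⟨by linarith, by linarith⟩) hun.le
        nlinarith
      · exact absurd hpe hp1
      · -- p > 1 : q < 0, u < 0, sinh(qu) > 0, c = 1-2p < -1
        have hs : 0 < Real.sinh ((1 - p) * u) := by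
          rw [← Real.sinh_zero]
          exact Real.sinh_lt_sinh.mpr (by nlinarith)
        rw [div_le_iff₀ hs]
        have := main_ge_neg (show 1 - 2 * p ≤ -1 by linarith) hun.le
        nlinarith
  · -- u > 0
    rcases lt_trichotomy p 0 with hpneg | hpz | hppos
    · have hs : 0 < Real.sinh ((1 - p) * u) := by
        rw [← Real.sinh_zero]
        exact Real.sinh_lt_sinh.mpr (by nlinarith)
      rw [div_le_iff₀ hs]
      have := main_le (Or.inl (show (1:ℝ) ≤ 1 - 2 * p by linarith)) hup.le
      nlinarith
    · exact absurd hpz hp0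
    · have hp2 : 1 / 2 ≤ p := hp.resolve_left (not_lt.mpr hppos.le)
      rcases lt_trichotomy p 1 with hplt | hpe | hpgt
      · have hs : 0 < Real.sinh ((1 - p) * u) := by
          rw [← Real.sinh_zero]
          exact Real.sinh_lt_sinh.mpr (by nlinarith)
        rw [div_le_iff₀ hs]
        have := main_le (c := 1 - 2 * p) (Or.inr ⟨by linarith, by linarith⟩) hup.le
        nlinarith
      · exact absurd hpe hp1
      · have hs : Real.sinh ((1 - p) * u) < 0 := by
          rw [← Real.sinh_zero]
          exact Real.sinh_lt_sinh.mpr (by nlinarith)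
        rw [div_le_iff_of_neg hs]
        have := main_le_neg (show 1 - 2 * p ≤ -1 by linarith) hup.le
        nlinarith

lemma exp2_sub (a : ℝ) : Real.exp (2 * a) - 1 = 2 * Real.exp a * Real.sinh a := by
  rw [Real.sinh_eq, Real.exp_neg, show 2 * a = a + a by ring, Real.exp_add]
  field_simp

lemma exp2_add (a : ℝ) : Real.exp (2 * a) + 1 = 2 * Real.exp a * Real.cosh a := by
  rw [Real.cosh_eq, Real.exp_neg, show 2 * a = a + a by ring, Real.exp_add]
  field_simp

lemma keyK (x p : ℝ) (hx : 0 < x) (hx1 : x ≠ 1)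
    (hp : p < 0 ∨ 1 / 2 ≤ p) (hp0 : p ≠ 0) (hp1 : p ≠ 1) :
    (1 - p) * (x - 1) / (x ^ (1 - p) - 1) ≤ (x ^ p + 1) / 2 := by
  have hq0 : 1 - p ≠ 0 := sub_ne_zero.mpr (Ne.symm hp1)
  have hlx : Real.log x ≠ 0 := by
    intro h
    apply hx1
    rw [← Real.exp_log hx, h, Real.exp_zero]
  set u := Real.log x / 2 with hudef
  have hu : u ≠ 0 := div_ne_zero hlx two_ne_zero
  have hlog2 : Real.log x = 2 * u := by rw [hudef]; ring
  have hxu : x = Real.exp (2 * u) := by rw [← hlog2, Real.exp_log hx]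
  have e1 : x - 1 = 2 * Real.exp u * Real.sinh u := by
    rw [hxu]; exact exp2_sub u
  have e2 : x ^ (1 - p) - 1 = 2 * Real.exp ((1 - p) * u) * Real.sinh ((1 - p) * u) := by
    rw [Real.rpow_def_of_pos hx, show Real.log x * (1 - p) = 2 * ((1 - p) * u) by
      rw [hlog2]; ring]
    exact exp2_sub _
  have e3 : x ^ p + 1 = 2 * Real.exp (p * u) * Real.cosh (p * u) := by
    rw [Real.rpow_def_of_pos hx, show Real.log x * p = 2 * (p * u) by rw [hlog2]; ring]
    exact exp2_add _
  have hs : Real.sinh ((1 - p) * u) ≠ 0 := Real.sinh_ne_zero.mpr (mul_ne_zero hq0 hu)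
  have hsplit : Real.exp u = Real.exp (p * u) * Real.exp ((1 - p) * u) := by
    rw [← Real.exp_add]; ring_nf
  rw [e1, e2, e3]
  have hle := core p u hp hp0 hp1 hu
  have hmul := mul_le_mul_of_nonneg_left hle (Real.exp_pos (p * u)).le
  have eL : (1 - p) * (2 * Real.exp u * Real.sinh u) /
      (2 * Real.exp ((1 - p) * u) * Real.sinh ((1 - p) * u)) =
      Real.exp (p * u) * ((1 - p) * Real.sinh u / Real.sinh ((1 - p) * u)) := by
    rw [hsplit]
    field_simp
  rw [eL, show 2 * Real.exp (p * u) * Real.cosh (p * u) / 2 =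
    Real.exp (p * u) * Real.cosh (p * u) by ring]
  exact hmul

lemma ratio_pos (x r : ℝ) (hx : 0 < x) (hx1 : x ≠ 1) (hr : r ≠ 0) :
    0 < r * (x - 1) / (x ^ r - 1) := by
  rcases lt_or_gt_of_ne hx1 with hxl | hxg
  · rcases lt_or_gt_of_ne hr with hrl | hrg
    · apply div_pos
      · nlinarith
      · have : 1 < x ^ r := Real.one_lt_rpow_iff_of_pos hx |>.mpr (Or.inr ⟨hxl, hrl⟩)
        linarith
    · rw [div_pos_iff]
      right
      constructor
      · nlinarith
      · have : x ^ r < 1 := Real.rpow_lt_one hx.le hxl hrg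
        linarith
  · rcases lt_or_gt_of_ne hr with hrl | hrg
    · rw [div_pos_iff]
      right
      constructor
      · nlinarith
      · have : x ^ r < 1 := Real.rpow_lt_one_of_one_lt_of_neg hxg hrl
        linarith
    · apply div_pos
      · nlinarith
      · have : 1 < x ^ r := Real.one_lt_rpow_iff_of_pos hx |>.mpr (Or.inl ⟨hxg, hrg⟩)
        linarith

theorem wyd_le_hatA (x p : ℝ) (hx : 0 < x) (hx1 : x ≠ 1)
    (hp : p < 0 ∨ 1 / 2 ≤ p) (hp0 : p ≠ 0) (hp1 : p ≠ 1) :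
    p * (1 - p) * (x - 1) ^ 2 / ((x ^ p - 1) * (x ^ (1 - p) - 1)) ≤
      p * (x ^ p + 1) * (x - 1) / (2 * (x ^ p - 1)) := by
  have hq0 : 1 - p ≠ 0 := sub_ne_zero.mpr (Ne.symm hp1)
  have hC := ratio_pos x p hx hx1 hp0
  have hC' := ratio_pos x (1 - p) hx hx1 hq0
  have hd1 : x ^ p - 1 ≠ 0 := by
    intro h
    rw [h] at hC
    simp at hC
  have hd2 : x ^ (1 - p) - 1 ≠ 0 := by
    intro h
    rw [h] at hC'
    simp at hC'
  have eqL : p * (1 - p) * (x - 1) ^ 2 / ((x ^ p - 1) * (x ^ (1 - p) - 1)) =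
      (p * (x - 1) / (x ^ p - 1)) * ((1 - p) * (x - 1) / (x ^ (1 - p) - 1)) := by
    field_simp
  have eqR : p * (x ^ p + 1) * (x - 1) / (2 * (x ^ p - 1)) =
      (p * (x - 1) / (x ^ p - 1)) * ((x ^ p + 1) / 2) := by
    field_simp
  rw [eqL, eqR]
  exact mul_le_mul_of_nonneg_left (keyK x p hx hx1 hp hp0 hp1) hC.le
end

section
/- For every real x > 0 with x ≠ 1, one has (L(x,1)² - x)/(2·L(x,1)²) ≤ (A(x,1) - L(x,1))/L(x,1); equivalently, 3·L(x,1) ≤ 2·A(x,1) + x/L(x,1). -/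
open Real

private lemma aux_mono : MonotoneOn (fun y : ℝ => Real.log y - 3*(y^2-1)/(y^2+4*y+1)) (Set.Ioi 0) := by
  have hconv : Convex ℝ (Set.Ioi (0:ℝ)) := convex_Ioi 0
  have hden : ∀ y : ℝ, y ∈ Set.Ioi (0:ℝ) → (0:ℝ) < y^2+4*y+1 := by
    intro y hy; simp only [Set.mem_Ioi] at hy; positivity
  have hder : ∀ y ∈ Set.Ioi (0:ℝ),
      HasDerivAt (fun y : ℝ => Real.log y - 3*(y^2-1)/(y^2+4*y+1))
        (1/y - (6*y*(y^2+4*y+1) - 3*(y^2-1)*(2*y+4))/(y^2+4*y+1)^2) y := by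
    intro y hy
    simp only [Set.mem_Ioi] at hy
    have hd : (0:ℝ) < y^2+4*y+1 := by positivity
    have hnum : HasDerivAt (fun y : ℝ => 3*(y^2-1)) (6*y) y := by
      have := ((hasDerivAt_pow 2 y).sub_const 1).const_mul (3:ℝ)
      exact this.congr_deriv (by norm_num; ring)
    have hden' : HasDerivAt (fun y : ℝ => y^2+4*y+1) (2*y+4) y := by
      have := ((hasDerivAt_pow 2 y).add ((hasDerivAt_id y).const_mul 4)).add_const 1
      exact this.congr_deriv (by norm_num)
    have hdiv := hnum.div hden' (ne_of_gt hd)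
    have hlog := Real.hasDerivAt_log (ne_of_gt hy)
    have := hlog.sub hdiv
    exact this.congr_deriv (by rw [one_div])
  apply monotoneOn_of_deriv_nonneg hconv
  · exact ContinuousOn.sub (Real.continuousOn_log.mono (by intro y hy; simp only [Set.mem_Ioi] at hy; simpa using ne_of_gt hy))
      (ContinuousOn.div (by fun_prop) (by fun_prop) (fun y hy => ne_of_gt (hden y hy)))
  · intro y hy
    rw [interior_Ioi] at hy
    exact ((hder y hy).differentiableAt).differentiableWithinAt
  · intro y hy
    rw [interior_Ioi] at hy
    simp only [Set.mem_Ioi] at hy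
    have hd : (0:ℝ) < y^2+4*y+1 := by positivity
    rw [((hder y hy).deriv)]
    have heq : 1/y - (6*y*(y^2+4*y+1) - 3*(y^2-1)*(2*y+4))/(y^2+4*y+1)^2
        = (y-1)^4/(y*(y^2+4*y+1)^2) := by
      field_simp
      ring
    rw [heq]; positivity

theorem log_mean_first_ineq (x : ℝ) (hx : 0 < x) (hx1 : x ≠ 1) :
    (((x - 1) / Real.log x) ^ 2 - x) / (2 * ((x - 1) / Real.log x) ^ 2) ≤
        ((x + 1) / 2 - (x - 1) / Real.log x) / ((x - 1) / Real.log x) ∧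
      3 * ((x - 1) / Real.log x) ≤ 2 * ((x + 1) / 2) + x / ((x - 1) / Real.log x) := by
  set L : ℝ := (x - 1) / Real.log x with hLdef
  have hden : (0:ℝ) < x^2+4*x+1 := by positivity
  -- main facts: L > 0 and 3(x+1)L ≤ x²+4x+1
  have hmain : 0 < L ∧ 3*(x+1)*L ≤ x^2+4*x+1 := by
    rcases lt_or_gt_of_ne hx1 with h1 | h1
    · -- x < 1
      have hlog : Real.log x < 0 := Real.log_neg hx h1
      have hL : 0 < L := div_pos_of_neg_of_neg (by linarith) hlog
      have hkey := aux_mono (Set.mem_Ioi.mpr hx) (Set.mem_Ioi.mpr one_pos) (le_of_lt h1)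
      simp only [Real.log_one] at hkey
      norm_num at hkey
      have hkey' : (x^2+4*x+1) * Real.log x ≤ 3*(x^2-1) := by
        rw [le_div_iff₀ hden] at hkey
        linarith [hkey]
      have hLl : L * Real.log x = x - 1 := by
        rw [hLdef, div_mul_cancel₀ _ (ne_of_lt hlog)]
      constructor
      · exact hL
      · -- from hkey' * L : (x²+4x+1)(x-1) ≤ 3(x²-1)L ; divide by x-1 < 0
        have := mul_le_mul_of_nonneg_left hkey' (le_of_lt hL)
        rw [show L * ((x^2+4*x+1) * Real.log x) = (x^2+4*x+1) * (L * Real.log x) by ring, hLl] at this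
        -- this : (x²+4x+1)*(x-1) ≤ L * (3*(x²-1))
        nlinarith [this, hL, sq_nonneg (x-1)]
    · -- x > 1
      have hlog : 0 < Real.log x := Real.log_pos h1
      have hL : 0 < L := div_pos (by linarith) hlog
      have hkey := aux_mono (Set.mem_Ioi.mpr one_pos) (Set.mem_Ioi.mpr hx) (le_of_lt h1)
      simp only [Real.log_one] at hkey
      norm_num at hkey
      have hkey' : 3*(x^2-1) ≤ (x^2+4*x+1) * Real.log x := by
        rw [div_le_iff₀ hden] at hkey
        linarith [hkey]
      have hLl : L * Real.log x = x - 1 := by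
        rw [hLdef, div_mul_cancel₀ _ (ne_of_gt hlog)]
      constructor
      · exact hL
      · have := mul_le_mul_of_nonneg_left hkey' (le_of_lt hL)
        rw [show L * ((x^2+4*x+1) * Real.log x) = (x^2+4*x+1) * (L * Real.log x) by ring, hLl] at this
        nlinarith [this, hL, sq_nonneg (x-1)]
  obtain ⟨hL, hLM⟩ := hmain
  -- quadratic consequence: 3L² ≤ (x+1)L + x
  have hquad : 3*L^2 ≤ (x+1)*L + x := by
    nlinarith [hLM, hL, mul_pos hL hL, sq_nonneg (x-1), mul_nonneg (mul_nonneg hx.le (sq_nonneg (x-1))) hL.le, mul_le_mul_of_nonneg_left hLM hL.le]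
  constructor
  · rw [div_le_div_iff₀ (by positivity) hL]
    nlinarith [hquad, hL, mul_le_mul_of_nonneg_left hquad hL.le]
  · have hxdiv : 3*L - (x+1) ≤ x / L := by
      rw [le_div_iff₀ hL]
      nlinarith [hquad]
    linarith [hxdiv]
end

section
/- For every real x > 0 with x ≠ 1, one has (A(x,1) - L(x,1))/L(x,1) ≤ log K(x), where K is the Kantorovich constant. -/
open Real

/-- Simpson-rule upper bound for log. -/
lemma pade_upper (x : ℝ) (hx : 1 ≤ x) :
    Real.log x ≤ (x - 1) * (x ^ 2 + 10 * x + 1) / (6 * x * (x + 1)) := by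
  have key : ∀ y : ℝ, 0 < y →
      HasDerivAt (fun t : ℝ => (t - 1) * (t ^ 2 + 10 * t + 1) / (6 * t * (t + 1)) - Real.log t)
        ((y - 1) ^ 4 / (6 * y ^ 2 * (y + 1) ^ 2)) y := by
    intro y hy
    have hy1 : (0:ℝ) < y + 1 := by linarith
    have hD : 6 * y * (y + 1) ≠ 0 := by positivity
    have h1 : HasDerivAt (fun t : ℝ => (t - 1) * (t ^ 2 + 10 * t + 1))
        ((1) * (y ^ 2 + 10 * y + 1) + (y - 1) * (2 * y + 10)) y := by
      have := ((hasDerivAt_id y).sub_const 1).mul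
        (((hasDerivAt_pow 2 y).add (((hasDerivAt_id y).const_mul 10))).add_const 1)
      refine this.congr_deriv ?_
      simp only [id_eq, Pi.add_apply]
      push_cast
      ring
    have h2 : HasDerivAt (fun t : ℝ => 6 * t * (t + 1)) (6 * (y + 1) + 6 * y * 1) y := by
      have := (((hasDerivAt_id y).const_mul 6)).mul ((hasDerivAt_id y).add_const 1)
      refine this.congr_deriv ?_
      simp only [id_eq]
      ring
    have h3 := (h1.div h2 hD).sub (Real.hasDerivAt_log (ne_of_gt hy))
    refine h3.congr_deriv ?_
    field_simp
    ring
  have hcont : ContinuousOn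
      (fun t : ℝ => (t - 1) * (t ^ 2 + 10 * t + 1) / (6 * t * (t + 1)) - Real.log t)
      (Set.Ici 1) := by
    intro y hy
    exact ((key y (lt_of_lt_of_le one_pos hy)).continuousAt).continuousWithinAt
  have hmono : MonotoneOn
      (fun t : ℝ => (t - 1) * (t ^ 2 + 10 * t + 1) / (6 * t * (t + 1)) - Real.log t)
      (Set.Ici 1) := by
    apply monotoneOn_of_deriv_nonneg (convex_Ici 1) hcont
    · intro y hy
      rw [interior_Ici] at hy
      exact (key y (lt_trans one_pos hy)).differentiableAt.differentiableWithinAt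
    · intro y hy
      rw [interior_Ici] at hy
      rw [(key y (lt_trans one_pos hy)).deriv]
      have : (0:ℝ) < y := lt_trans one_pos hy
      positivity
  have h0 := hmono (Set.self_mem_Ici) (Set.mem_Ici.mpr hx) hx
  simp only [Real.log_one] at h0
  norm_num at h0
  linarith

/-- Two-point Gauss lower bound for log. -/
lemma pade_lower (x : ℝ) (hx : 1 ≤ x) :
    3 * (x ^ 2 - 1) / (x ^ 2 + 4 * x + 1) ≤ Real.log x := by
  have key : ∀ y : ℝ, 0 < y →
      HasDerivAt (fun t : ℝ => Real.log t - 3 * (t ^ 2 - 1) / (t ^ 2 + 4 * t + 1))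
        ((y - 1) ^ 4 / (y * (y ^ 2 + 4 * y + 1) ^ 2)) y := by
    intro y hy
    have hD : y ^ 2 + 4 * y + 1 ≠ 0 := by positivity
    have h1 : HasDerivAt (fun t : ℝ => 3 * (t ^ 2 - 1)) (3 * (2 * y)) y := by
      have := (((hasDerivAt_pow 2 y).sub_const 1).const_mul (3:ℝ))
      refine this.congr_deriv ?_
      push_cast
      ring
    have h2 : HasDerivAt (fun t : ℝ => t ^ 2 + 4 * t + 1) (2 * y + 4) y := by
      have := ((hasDerivAt_pow 2 y).add ((hasDerivAt_id y).const_mul 4)).add_const 1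
      refine this.congr_deriv ?_
      push_cast
      ring
    have h3 := (Real.hasDerivAt_log (ne_of_gt hy)).sub (h1.div h2 hD)
    refine h3.congr_deriv ?_
    field_simp
    ring
  have hcont : ContinuousOn
      (fun t : ℝ => Real.log t - 3 * (t ^ 2 - 1) / (t ^ 2 + 4 * t + 1)) (Set.Ici 1) := by
    intro y hy
    exact ((key y (lt_of_lt_of_le one_pos hy)).continuousAt).continuousWithinAt
  have hmono : MonotoneOn
      (fun t : ℝ => Real.log t - 3 * (t ^ 2 - 1) / (t ^ 2 + 4 * t + 1)) (Set.Ici 1) := by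
    apply monotoneOn_of_deriv_nonneg (convex_Ici 1) hcont
    · intro y hy
      rw [interior_Ici] at hy
      exact (key y (lt_trans one_pos hy)).differentiableAt.differentiableWithinAt
    · intro y hy
      rw [interior_Ici] at hy
      rw [(key y (lt_trans one_pos hy)).deriv]
      have : (0:ℝ) < y := lt_trans one_pos hy
      positivity
  have h0 := hmono (Set.self_mem_Ici) (Set.mem_Ici.mpr hx) hx
  simp only [Real.log_one] at h0
  norm_num at h0
  linarith

/-- Core inequality, linear-in-logs form, for x > 1. -/
lemma core_key (x : ℝ) (hx : 1 < x) :
    (3 * x - 1) / 2 * Real.log x ≤ (x - 1) + 2 * (x - 1) * Real.log ((x + 1) / 2) := by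
  have hx0 : (0:ℝ) < x := lt_trans one_pos hx
  set u := Real.log x with hu_def
  set v := Real.log ((x + 1) / 2) with hv_def
  rcases le_or_gt x 8 with h8 | h8
  · -- 1 < x ≤ 8 : Padé bounds
    have hu : u ≤ (x - 1) * (x ^ 2 + 10 * x + 1) / (6 * x * (x + 1)) := pade_upper x (le_of_lt hx)
    have hvl : 3 * (((x + 1) / 2) ^ 2 - 1) / (((x + 1) / 2) ^ 2 + 4 * ((x + 1) / 2) + 1) ≤ v :=
      pade_lower ((x + 1) / 2) (by linarith)
    have hrw : 3 * (((x + 1) / 2) ^ 2 - 1) / (((x + 1) / 2) ^ 2 + 4 * ((x + 1) / 2) + 1)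
        = 3 * (x - 1) * (x + 3) / (x ^ 2 + 10 * x + 13) := by
      rw [div_eq_div_iff] <;> nlinarith [sq_nonneg (x+1), sq_nonneg x]
    rw [hrw] at hvl
    have hd1 : (0:ℝ) < 6 * x * (x + 1) := by positivity
    have hd2 : (0:ℝ) < x ^ 2 + 10 * x + 13 := by positivity
    have hu' : u * (6 * x * (x + 1)) ≤ (x - 1) * (x ^ 2 + 10 * x + 1) := by
      rw [← le_div_iff₀ hd1]; exact hu
    have hv' : 3 * (x - 1) * (x + 3) ≤ v * (x ^ 2 + 10 * x + 13) := by
      rw [← div_le_iff₀ hd2]; exact hvl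
    have hpos : (0:ℝ) < 12 * x * (x + 1) * (x ^ 2 + 10 * x + 13) := by positivity
    -- polynomial certificate
    have hpoly : 0 ≤ (x - 1) ^ 3 * ((x - 1) * (-3 * x ^ 2 + 16 * x + 83) + 96) := by
      have h1 : (0:ℝ) ≤ (x - 1) ^ 3 := pow_nonneg (by linarith) 3
      have h2 : (0:ℝ) ≤ (x - 1) * (-3 * x ^ 2 + 16 * x + 83) + 96 := by nlinarith [sq_nonneg x, sq_nonneg (x - 1), mul_nonneg (sq_nonneg x) (by linarith : (0:ℝ) ≤ 8 - x)]
      exact mul_nonneg h1 h2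
    have p1 : (3 * x - 1) * (x ^ 2 + 10 * x + 13) * (u * (6 * x * (x + 1)))
        ≤ (3 * x - 1) * (x ^ 2 + 10 * x + 13) * ((x - 1) * (x ^ 2 + 10 * x + 1)) := by
      apply mul_le_mul_of_nonneg_left hu'
      nlinarith
    have p2 : 12 * x * (x + 1) * (x - 1) * (3 * (x - 1) * (x + 3))
        ≤ 12 * x * (x + 1) * (x - 1) * (v * (x ^ 2 + 10 * x + 13)) := by
      apply mul_le_mul_of_nonneg_left hv'
      nlinarith
    nlinarith [p1, p2, hpoly, hpos]
  · -- x > 8 : crude bounds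
    have hu2 : (2:ℝ) < u := by
      have h8' : Real.log 8 ≤ u := Real.log_le_log (by norm_num) (by linarith)
      have : Real.log 8 = 3 * Real.log 2 := by
        rw [show (8:ℝ) = 2 ^ 3 by norm_num, Real.log_pow]; push_cast; ring
      nlinarith [Real.log_two_gt_d9]
    have hv2 : u - Real.log 2 ≤ v := by
      have h1 : Real.log (x / 2) ≤ v := Real.log_le_log (by linarith) (by linarith)
      rw [Real.log_div (ne_of_gt hx0) two_ne_zero] at h1
      exact h1
    have hl2 : Real.log 2 < 0.6931471808 := Real.log_two_lt_d9
    nlinarith [mul_nonneg (by linarith : (0:ℝ) ≤ u - 2) (by linarith : (0:ℝ) ≤ x - 3), hv2, hl2]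

/-- The theorem for x > 1. -/
lemma core_s10 (x : ℝ) (hx : 1 < x) :
    ((x + 1) / 2 - (x - 1) / Real.log x) / ((x - 1) / Real.log x) ≤
      Real.log ((x + 1) ^ 2 / (4 * x)) := by
  have hx0 : (0:ℝ) < x := lt_trans one_pos hx
  have hu : (0:ℝ) < Real.log x := Real.log_pos hx
  have hL : (0:ℝ) < (x - 1) / Real.log x := div_pos (by linarith) hu
  have hK : Real.log ((x + 1) ^ 2 / (4 * x)) = 2 * Real.log ((x + 1) / 2) - Real.log x := by
    rw [show (x + 1) ^ 2 / (4 * x) = ((x + 1) / 2) ^ 2 / x by ring,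
      Real.log_div (by positivity) (ne_of_gt hx0), Real.log_pow]
    push_cast; ring
  rw [div_le_iff₀ hL, hK]
  have key := core_key x hx
  have h1 : (x + 1) / 2 * Real.log x - (x - 1)
      ≤ (2 * Real.log ((x + 1) / 2) - Real.log x) * (x - 1) := by nlinarith
  calc (x + 1) / 2 - (x - 1) / Real.log x
      = ((x + 1) / 2 * Real.log x - (x - 1)) / Real.log x := by
        field_simp
    _ ≤ ((2 * Real.log ((x + 1) / 2) - Real.log x) * (x - 1)) / Real.log x := by
        exact (div_le_div_iff_of_pos_right hu).mpr h1
    _ = (2 * Real.log ((x + 1) / 2) - Real.log x) * ((x - 1) / Real.log x) := by ring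

theorem arith_log_mean_ratio_le_log_kantorovich (x : ℝ) (hx : 0 < x) (hx1 : x ≠ 1) :
    ((x + 1) / 2 - (x - 1) / Real.log x) / ((x - 1) / Real.log x) ≤
      Real.log ((x + 1) ^ 2 / (4 * x)) := by
  rcases lt_or_gt_of_ne hx1 with h | h
  · -- 0 < x < 1 : use symmetry x ↦ x⁻¹
    have hx0 : x ≠ 0 := ne_of_gt hx
    have hinv : 1 < x⁻¹ := (one_lt_inv₀ hx).mpr h
    have H := core_s10 x⁻¹ hinv
    have hlu : Real.log x ≠ 0 := ne_of_lt (Real.log_neg hx h)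
    have hx1' : x - 1 ≠ 0 := by intro hc; exact hx1 (by linarith)
    have hQ : (x⁻¹ - 1) / Real.log x⁻¹ ≠ 0 := by
      rw [Real.log_inv]
      exact div_ne_zero (ne_of_gt (by linarith)) (by simpa using hlu)
    have hS : (x - 1) / Real.log x ≠ 0 := div_ne_zero hx1' hlu
    have e1 : ((x⁻¹ + 1) / 2 - (x⁻¹ - 1) / Real.log x⁻¹) / ((x⁻¹ - 1) / Real.log x⁻¹)
        = ((x + 1) / 2 - (x - 1) / Real.log x) / ((x - 1) / Real.log x) := by
      rw [div_eq_div_iff hQ hS, Real.log_inv]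
      field_simp
      ring
    have e2 : (x⁻¹ + 1) ^ 2 / (4 * x⁻¹) = (x + 1) ^ 2 / (4 * x) := by
      field_simp
      ring
    rw [e1, e2] at H
    exact H
  · exact core_s10 x h
end

section
/- For every real x > 1, one has 1 - x(log x)²/(x - 1)² + 2·log(4x/(x+1)²) ≤ 0. -/
open Real

lemma aux_two_sub_le (x : ℝ) (hx : 1 < x) : 2 * (x - 1) ≤ (x + 1) * Real.log x := by
  have hmono : MonotoneOn (fun y : ℝ => (y + 1) * Real.log y - 2 * (y - 1)) (Set.Ici 1) := by
    apply monotoneOn_of_deriv_nonneg (convex_Ici 1)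
    · apply ContinuousOn.sub
      · exact (continuousOn_id.add continuousOn_const).mul
          (Real.continuousOn_log.mono (by intro y hy; simp at hy ⊢; linarith))
      · fun_prop
    · intro y hy
      rw [interior_Ici] at hy
      have hy0 : (0:ℝ) < y := lt_trans one_pos hy
      exact ((((hasDerivAt_id y).add_const 1).mul (Real.hasDerivAt_log hy0.ne')).sub
          (((hasDerivAt_id y).sub_const 1).const_mul 2)).differentiableAt.differentiableWithinAt
    · intro y hy
      rw [interior_Ici] at hy
      have hy1 : (1:ℝ) < y := hy
      have hy0 : (0:ℝ) < y := by linarith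
      have hd : HasDerivAt (fun y : ℝ => (y + 1) * Real.log y - 2 * (y - 1))
          (1 * Real.log y + (y + 1) * y⁻¹ - 2 * 1) y :=
        (((hasDerivAt_id y).add_const 1).mul (Real.hasDerivAt_log hy0.ne')).sub
          (((hasDerivAt_id y).sub_const 1).const_mul 2)
      rw [hd.deriv]
      have hlog : 1 - y⁻¹ ≤ Real.log y := Real.one_sub_inv_le_log_of_pos hy0
      have hinv : y * y⁻¹ = 1 := mul_inv_cancel₀ hy0.ne'
      nlinarith [mul_pos hy0 (inv_pos.mpr hy0)]
  have h := hmono (Set.self_mem_Ici) (Set.mem_Ici.mpr hx.le) hx.le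
  simp only [Real.log_one] at h
  linarith

theorem log_kantorovich_reformulation_le (x : ℝ) (hx : 1 < x) :
    1 - x * (Real.log x) ^ 2 / (x - 1) ^ 2 + 2 * Real.log (4 * x / (x + 1) ^ 2) ≤ 0 := by
  have hx0 : (0:ℝ) < x := by linarith
  have hxm : (0:ℝ) < x - 1 := by linarith
  have hxp : (0:ℝ) < x + 1 := by linarith
  have hL : 0 < Real.log x := Real.log_pos hx
  have h1 : 2 * (x - 1) ≤ (x + 1) * Real.log x := aux_two_sub_le x hx
  have hlog4 : Real.log (4 * x / (x + 1) ^ 2) ≤ 4 * x / (x + 1) ^ 2 - 1 :=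
    Real.log_le_sub_one_of_pos (by positivity)
  have key : 4 * x / (x + 1) ^ 2 ≤ x * (Real.log x) ^ 2 / (x - 1) ^ 2 := by
    rw [div_le_div_iff₀ (by positivity) (by positivity)]
    have h2 : (2 * (x - 1)) * (2 * (x - 1)) ≤ ((x + 1) * Real.log x) * ((x + 1) * Real.log x) :=
      mul_self_le_mul_self (by linarith) h1
    nlinarith [sq_nonneg (Real.log x)]
  have hB : 4 * x / (x + 1) ^ 2 ≤ 1 := by
    rw [div_le_one (by positivity)]
    nlinarith [sq_nonneg (x - 1)]
  linarith
end

section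
/- For every real x > 1, one has 1 - (x+1)·log x/(2(x - 1)) + log((x+1)²/(4x)) ≥ 0. -/
open Real Set

private noncomputable def Fk (x : ℝ) : ℝ :=
  2*(x-1) + 2*(x-1)*(2*Real.log (x+1) - Real.log 4 - Real.log x) - (x+1)*Real.log x

private noncomputable def Fk1 (x : ℝ) : ℝ :=
  2 + 2*(2*Real.log (x+1) - Real.log 4 - Real.log x) + 2*(x-1)^2/(x*(x+1))
    - Real.log x - (x+1)/x

private lemma aux_nonneg (f f' : ℝ → ℝ)
    (hd : ∀ y ∈ Ici (1:ℝ), HasDerivAt f (f' y) y)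
    (h0 : f 1 = 0) (hf' : ∀ y ∈ Ici (1:ℝ), 0 ≤ f' y) :
    ∀ x ∈ Ici (1:ℝ), 0 ≤ f x := by
  intro x hx
  have hmono : MonotoneOn f (Ici 1) := by
    apply monotoneOn_of_deriv_nonneg (convex_Ici 1)
    · exact fun y hy => (hd y hy).continuousAt.continuousWithinAt
    · intro y hy
      rw [interior_Ici] at hy
      exact (hd y (mem_Ici.mpr (mem_Ioi.mp hy).le)).differentiableAt.differentiableWithinAt
    · intro y hy
      rw [interior_Ici] at hy
      rw [(hd y (mem_Ici.mpr (mem_Ioi.mp hy).le)).deriv]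
      exact hf' y (mem_Ici.mpr (mem_Ioi.mp hy).le)
  have := hmono self_mem_Ici hx hx
  linarith [h0 ▸ this]

private lemma hasDerivAt_Fk {x : ℝ} (hx : (1:ℝ) ≤ x) : HasDerivAt Fk (Fk1 x) x := by
  have hx0 : x ≠ 0 := by linarith
  have hx1 : x + 1 ≠ 0 := by linarith
  have hlog : HasDerivAt Real.log (1/x) x := by
    simpa using Real.hasDerivAt_log hx0
  have hlog2 : HasDerivAt (fun y : ℝ => Real.log (y+1)) (1/(x+1)) x := by
    have := ((hasDerivAt_id x).add_const 1).log hx1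
    simpa using this
  have h1 : HasDerivAt (fun y : ℝ => 2*(y-1) + 2*(y-1)*(2*Real.log (y+1) - Real.log 4 - Real.log y) - (y+1)*Real.log y)
      (2 + (2*(2*Real.log (x+1) - Real.log 4 - Real.log x) + 2*(x-1)*(2*(1/(x+1)) - 1/x)) - (1*Real.log x + (x+1)*(1/x))) x := by
    have hd1 : HasDerivAt (fun y : ℝ => 2*(y-1)) 2 x := by
      simpa using ((hasDerivAt_id x).sub_const 1).const_mul 2
    have hL : HasDerivAt (fun y : ℝ => 2*Real.log (y+1) - Real.log 4 - Real.log y)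
        (2*(1/(x+1)) - 1/x) x := by
      exact ((hlog2.const_mul 2).sub_const (Real.log 4)).sub hlog
    have hd2 := (((hasDerivAt_id x).sub_const 1).const_mul 2).mul hL
    have hd3 := ((hasDerivAt_id x).add_const 1).mul hlog
    have := (hd1.add hd2).sub hd3
    simp only [id_eq] at this
    exact this.congr_deriv (by ring)
  have heq : (2 + (2*(2*Real.log (x+1) - Real.log 4 - Real.log x) + 2*(x-1)*(2*(1/(x+1)) - 1/x)) - (1*Real.log x + (x+1)*(1/x))) = Fk1 x := by
    unfold Fk1
    field_simp
    ring
  rw [heq] at h1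
  exact h1

private lemma hasDerivAt_Fk1 {x : ℝ} (hx : (1:ℝ) ≤ x) :
    HasDerivAt Fk1 ((x-1)*(x^2+6*x+1)/(x^2*(x+1)^2)) x := by
  have hx0 : x ≠ 0 := by linarith
  have hx1 : x + 1 ≠ 0 := by linarith
  have hlog : HasDerivAt Real.log (1/x) x := by
    simpa using Real.hasDerivAt_log hx0
  have hlog2 : HasDerivAt (fun y : ℝ => Real.log (y+1)) (1/(x+1)) x := by
    have := ((hasDerivAt_id x).add_const 1).log hx1
    simpa using this
  have hL : HasDerivAt (fun y : ℝ => 2*(2*Real.log (y+1) - Real.log 4 - Real.log y))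
      (2*(2*(1/(x+1)) - 1/x)) x := by
    exact (((hlog2.const_mul 2).sub_const (Real.log 4)).sub hlog).const_mul 2
  have hnum : HasDerivAt (fun y : ℝ => 2*(y-1)^2) (2*(2*(x-1))) x := by
    simpa using (((hasDerivAt_id x).sub_const 1).pow 2).const_mul 2
  have hden : HasDerivAt (fun y : ℝ => y*(y+1)) (1*(x+1) + x*1) x :=
    (hasDerivAt_id x).mul ((hasDerivAt_id x).add_const 1)
  have hq : HasDerivAt (fun y : ℝ => 2*(y-1)^2/(y*(y+1)))
      ((2*(2*(x-1))*(x*(x+1)) - 2*(x-1)^2*(1*(x+1)+x*1))/(x*(x+1))^2) x :=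
    hnum.div hden (by positivity)
  have hq2 : HasDerivAt (fun y : ℝ => (y+1)/y)
      ((1*x - (x+1)*1)/x^2) x :=
    ((hasDerivAt_id x).add_const 1).div (hasDerivAt_id x) hx0
  have h1 := (((hL.const_add 2).add hq).sub hlog).sub hq2
  have heq : (2*(2*(1/(x+1)) - 1/x) + (2*(2*(x-1))*(x*(x+1)) - 2*(x-1)^2*(1*(x+1)+x*1))/(x*(x+1))^2 - 1/x - (1*x - (x+1)*1)/x^2)
      = (x-1)*(x^2+6*x+1)/(x^2*(x+1)^2) := by
    field_simp
    ring
  rw [heq] at h1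
  exact h1

private lemma Fk_nonneg : ∀ x ∈ Ici (1:ℝ), 0 ≤ Fk x := by
  have hFk1 : ∀ x ∈ Ici (1:ℝ), 0 ≤ Fk1 x := by
    apply aux_nonneg Fk1 (fun x => (x-1)*(x^2+6*x+1)/(x^2*(x+1)^2))
    · exact fun y hy => hasDerivAt_Fk1 hy
    · unfold Fk1
      rw [show (4:ℝ)=2^2 by norm_num, Real.log_pow]
      norm_num
    · intro y hy
      simp only [mem_Ici] at hy
      have h1 : (0:ℝ) ≤ y - 1 := by linarith
      have h2 : (0:ℝ) < y^2+6*y+1 := by nlinarith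
      positivity
  apply aux_nonneg Fk Fk1
  · exact fun y hy => hasDerivAt_Fk hy
  · unfold Fk; norm_num
  · exact hFk1

theorem log_kantorovich_reformulation_ge (x : ℝ) (hx : 1 < x) :
    1 - (x + 1) * Real.log x / (2 * (x - 1)) + Real.log ((x + 1) ^ 2 / (4 * x)) ≥ 0 := by
  have hx0 : (0:ℝ) < x := by linarith
  have hx1 : (0:ℝ) < x - 1 := by linarith
  have hxp1 : (0:ℝ) < x + 1 := by linarith
  have hF := Fk_nonneg x (by simp [mem_Ici]; linarith)
  have hlogexp : Real.log ((x + 1) ^ 2 / (4 * x)) = 2*Real.log (x+1) - Real.log 4 - Real.log x := by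
    rw [Real.log_div (by positivity) (by positivity), Real.log_pow,
      Real.log_mul (by norm_num) (ne_of_gt hx0)]
    push_cast
    ring
  have key : 1 - (x + 1) * Real.log x / (2 * (x - 1)) + Real.log ((x + 1) ^ 2 / (4 * x))
      = Fk x / (2*(x-1)) := by
    rw [hlogexp]
    unfold Fk
    field_simp
    ring
  rw [key, ge_iff_le]
  positivity
end

section
/- For every real x > 0 with x ≠ 1 and every real p with 0 < p ≤ 1/2, one has Ĝ_p(x,1) ≥ K(x)^{-p(1-p)} · W_p(x,1), where K is the Kantorovich constant. -/
open Real Set Filter Topology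

lemma aux_sinh_le (t : ℝ) (ht : 0 ≤ t) : Real.sinh t ≤ t * Real.cosh t := by
  have h : MonotoneOn (fun s : ℝ => s * Real.cosh s - Real.sinh s) (Set.Ici 0) := by
    apply monotoneOn_of_hasDerivWithinAt_nonneg (f' := fun s => s * Real.sinh s)
      (convex_Ici 0)
    · exact ((continuous_id.mul Real.continuous_cosh).sub Real.continuous_sinh).continuousOn
    · intro s hs
      exact (((hasDerivAt_id s).mul (Real.hasDerivAt_cosh s)).sub (Real.hasDerivAt_sinh s)
        |>.congr_deriv (by simp only [id_eq]; ring)).hasDerivWithinAt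
    · intro s hs
      rw [interior_Ici] at hs
      exact mul_nonneg (le_of_lt hs) (Real.sinh_nonneg_iff.2 (le_of_lt hs))
  have := h (Set.mem_Ici.2 le_rfl) (Set.mem_Ici.2 ht) ht
  simpa using this

lemma aux_coth_mono : MonotoneOn (fun s : ℝ => Real.cosh s / Real.sinh s - 1 / s) (Set.Ioi 0) := by
  apply monotoneOn_of_hasDerivWithinAt_nonneg
    (f' := fun s => 1 / s ^ 2 - 1 / Real.sinh s ^ 2) (convex_Ioi 0)
  · apply ContinuousOn.sub
    · exact Real.continuous_cosh.continuousOn.div Real.continuous_sinh.continuousOn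
        (fun s hs => Real.sinh_ne_zero.2 (ne_of_gt hs))
    · exact continuousOn_const.div continuousOn_id (fun s hs => ne_of_gt hs)
  · intro s hs
    rw [interior_Ioi] at hs
    have hs0 : (0:ℝ) < s := hs
    have hsh : Real.sinh s ≠ 0 := Real.sinh_ne_zero.2 hs0.ne'
    have h1 : HasDerivAt (fun s : ℝ => Real.cosh s / Real.sinh s)
        ((Real.sinh s * Real.sinh s - Real.cosh s * Real.cosh s) / Real.sinh s ^ 2) s :=
      (Real.hasDerivAt_cosh s).div (Real.hasDerivAt_sinh s) hsh
    have h2 : HasDerivAt (fun s : ℝ => 1 / s) (-(1 / s ^ 2)) s := by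
      simpa using (hasDerivAt_inv hs0.ne').congr_deriv (by ring)
    have hcs : Real.cosh s * Real.cosh s - Real.sinh s * Real.sinh s = 1 := by
      have := Real.cosh_sq_sub_sinh_sq s
      nlinarith [this]
    have h3 : HasDerivAt (fun s : ℝ => Real.cosh s / Real.sinh s - 1 / s)
        (1 / s ^ 2 - 1 / Real.sinh s ^ 2) s := by
      refine (h1.sub h2).congr_deriv ?_
      have h4 : Real.sinh s * Real.sinh s - Real.cosh s * Real.cosh s = -1 := by linarith
      rw [h4]
      have : Real.sinh s ^ 2 ≠ 0 := pow_ne_zero 2 hsh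
      field_simp
      ring
    exact h3.hasDerivWithinAt
  · intro s hs
    rw [interior_Ioi] at hs
    have hs0 : (0:ℝ) < s := hs
    have h1 : s ≤ Real.sinh s := Real.self_le_sinh_iff.2 hs0.le
    have h2 : 0 < Real.sinh s := Real.sinh_pos_iff.2 hs0
    have : s ^ 2 ≤ Real.sinh s ^ 2 := by nlinarith
    have := one_div_le_one_div_of_le (by positivity) this
    linarith

lemma aux_tangent (u t : ℝ) (hu : 0 < u) (hut : u ≤ t) :
    Real.log (Real.sinh t) - Real.log t ≤ Real.log (Real.sinh u) - Real.log u
      + (t - u) * (Real.cosh t / Real.sinh t - 1 / t) := by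
  have ht : 0 < t := lt_of_lt_of_le hu hut
  set C : ℝ := Real.cosh t / Real.sinh t - 1 / t with hC
  have h : AntitoneOn (fun s : ℝ => Real.log (Real.sinh s) - Real.log s - s * C)
      (Set.Icc u t) := by
    apply antitoneOn_of_hasDerivWithinAt_nonpos
      (f' := fun s => Real.cosh s / Real.sinh s - 1 / s - C) (convex_Icc u t)
    · apply ContinuousOn.sub
      · apply ContinuousOn.sub
        · apply ContinuousOn.log Real.continuous_sinh.continuousOn
          intro s hs
          exact Real.sinh_ne_zero.2 (ne_of_gt (lt_of_lt_of_le hu hs.1))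
        · apply ContinuousOn.log continuousOn_id
          intro s hs
          exact ne_of_gt (lt_of_lt_of_le hu hs.1)
      · exact (continuous_id.mul continuous_const).continuousOn
    · intro s hs
      have hs' := interior_subset hs
      have hs0 : 0 < s := lt_of_lt_of_le hu hs'.1
      have hsh : Real.sinh s ≠ 0 := Real.sinh_ne_zero.2 hs0.ne'
      have h1 : HasDerivAt (fun s : ℝ => Real.log (Real.sinh s))
          (Real.cosh s / Real.sinh s) s := (Real.hasDerivAt_sinh s).log hsh
      have h2 : HasDerivAt Real.log (1 / s) s := by
        simpa [one_div] using Real.hasDerivAt_log hs0.ne'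
      have h3 : HasDerivAt (fun s : ℝ => s * C) C s := hasDerivAt_mul_const C
      exact ((h1.sub h2).sub h3).hasDerivWithinAt
    · intro s hs
      rw [interior_Icc] at hs
      have hs0 : 0 < s := lt_of_lt_of_le hu hs.1.le
      have := aux_coth_mono (Set.mem_Ioi.2 hs0) (Set.mem_Ioi.2 ht) hs.2.le
      simp only at this
      rw [hC]
      linarith
  have key := h (Set.mem_Icc.2 ⟨le_rfl, hut⟩) (Set.mem_Icc.2 ⟨hut, le_rfl⟩) hut
  simp only at key
  nlinarith [key]

lemma aux_endpoint_mono : MonotoneOn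
    (fun s : ℝ => Real.log (Real.cosh s) - s * (Real.cosh s / Real.sinh s) + 1)
    (Set.Ioi 0) := by
  apply monotoneOn_of_hasDerivWithinAt_nonneg
    (f' := fun s => (s * Real.cosh s - Real.sinh s) / (Real.cosh s * Real.sinh s ^ 2))
    (convex_Ioi 0)
  · apply ContinuousOn.add
    · apply ContinuousOn.sub
      · exact ContinuousOn.log Real.continuous_cosh.continuousOn
          (fun s _ => ne_of_gt (Real.cosh_pos s))
      · exact continuousOn_id.mul (Real.continuous_cosh.continuousOn.div
          Real.continuous_sinh.continuousOn
          (fun s hs => Real.sinh_ne_zero.2 (ne_of_gt hs)))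
    · exact continuousOn_const
  · intro s hs
    rw [interior_Ioi] at hs
    have hs0 : (0:ℝ) < s := hs
    have hsh : Real.sinh s ≠ 0 := Real.sinh_ne_zero.2 hs0.ne'
    have hch : Real.cosh s ≠ 0 := ne_of_gt (Real.cosh_pos s)
    have h1 : HasDerivAt (fun s : ℝ => Real.log (Real.cosh s))
        (Real.sinh s / Real.cosh s) s := (Real.hasDerivAt_cosh s).log hch
    have h2 : HasDerivAt (fun s : ℝ => s * (Real.cosh s / Real.sinh s))
        (1 * (Real.cosh s / Real.sinh s) +
          s * ((Real.sinh s * Real.sinh s - Real.cosh s * Real.cosh s) / Real.sinh s ^ 2)) s :=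
      (hasDerivAt_id s).mul ((Real.hasDerivAt_cosh s).div (Real.hasDerivAt_sinh s) hsh)
    have h3 := ((h1.sub h2).add_const 1).congr_deriv
      (g' := (s * Real.cosh s - Real.sinh s) / (Real.cosh s * Real.sinh s ^ 2)) ?_
    · exact h3.hasDerivWithinAt
    · have h4 : Real.sinh s * Real.sinh s - Real.cosh s * Real.cosh s = -1 := by
        nlinarith [Real.cosh_sq_sub_sinh_sq s]
      rw [h4]
      have h5 : Real.cosh s * Real.cosh s = 1 + Real.sinh s * Real.sinh s := by
        nlinarith [Real.cosh_sq_sub_sinh_sq s]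
      field_simp
      linear_combination (-Real.sinh s) * h5
  · intro s hs
    rw [interior_Ioi] at hs
    have hs0 : (0:ℝ) < s := hs
    have h1 : Real.sinh s ≤ s * Real.cosh s := aux_sinh_le s hs0.le
    have h2 : 0 < Real.sinh s := Real.sinh_pos_iff.2 hs0
    have h3 : 0 < Real.cosh s := Real.cosh_pos s
    apply div_nonneg (by linarith) (by positivity)

lemma aux_endpoint (t : ℝ) (ht : 0 < t) :
    t * (Real.cosh t / Real.sinh t) - 1 ≤ Real.log (Real.cosh t) := by
  set φ : ℝ → ℝ := fun s => Real.log (Real.cosh s) - s * (Real.cosh s / Real.sinh s) + 1 with hφ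
  have hlim : Filter.Tendsto φ (nhdsWithin 0 (Set.Ioi 0)) (nhds 0) := by
    have hslope : Filter.Tendsto (fun s : ℝ => Real.sinh s / s)
        (nhdsWithin 0 ({0}ᶜ)) (nhds 1) := by
      have := hasDerivAt_iff_tendsto_slope.1 (Real.hasDerivAt_sinh 0)
      rw [Real.cosh_zero] at this
      apply this.congr'
      filter_upwards [self_mem_nhdsWithin] with s hs
      simp [slope_def_field]
    have hinv : Filter.Tendsto (fun s : ℝ => s / Real.sinh s)
        (nhdsWithin 0 ({0}ᶜ)) (nhds 1) := by
      have := hslope.inv₀ one_ne_zero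
      simp only [inv_one] at this
      apply this.congr'
      filter_upwards [self_mem_nhdsWithin] with s hs
      rw [inv_div]
    have hcosh : Filter.Tendsto (fun s : ℝ => Real.cosh s) (nhdsWithin 0 ({0}ᶜ)) (nhds 1) := by
      have : Filter.Tendsto Real.cosh (nhds 0) (nhds 1) := by
        simpa using Real.continuous_cosh.tendsto 0
      exact this.mono_left nhdsWithin_le_nhds
    have hlog : Filter.Tendsto (fun s : ℝ => Real.log (Real.cosh s))
        (nhdsWithin 0 ({0}ᶜ)) (nhds 0) := by
      have : Filter.Tendsto Real.log (nhds 1) (nhds 0) := by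
        simpa using (Real.continuousAt_log one_ne_zero).tendsto
      exact this.comp hcosh
    have hmain : Filter.Tendsto φ (nhdsWithin 0 ({0}ᶜ)) (nhds 0) := by
      have h2 : Filter.Tendsto (fun s : ℝ => s * (Real.cosh s / Real.sinh s))
          (nhdsWithin 0 ({0}ᶜ)) (nhds 1) := by
        have := hinv.mul hcosh
        simp only [one_mul] at this
        apply this.congr'
        filter_upwards [self_mem_nhdsWithin] with s hs
        ring
      have := (hlog.sub h2).add_const 1
      simp only [zero_sub, neg_add_cancel] at this
      exact this
    exact hmain.mono_left (nhdsWithin_mono 0 (fun s hs => ne_of_gt hs))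
  have hev : ∀ᶠ s in nhdsWithin 0 (Set.Ioi 0), φ s ≤ φ t := by
    filter_upwards [Ioo_mem_nhdsGT_of_mem (Set.mem_Ico.2 ⟨le_rfl, ht⟩)] with s hs
    exact aux_endpoint_mono (Set.mem_Ioi.2 hs.1) (Set.mem_Ioi.2 ht) hs.2.le
  have h0 : (0:ℝ) ≤ φ t := le_of_tendsto hlim hev
  rw [hφ] at h0
  simp only at h0
  linarith

lemma core_pos (t q : ℝ) (ht : 0 < t) (hq : 1/2 ≤ q) (hq1 : q ≤ 1) :
    q * Real.sinh t ≤ Real.sinh (q*t) * Real.cosh t ^ (2*q*(1-q)) := by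
  have hq0 : 0 < q := lt_of_lt_of_le (by norm_num) hq
  rcases eq_or_lt_of_le hq1 with h1 | h1
  · subst h1
    simp [Real.rpow_zero]
  · have hu : 0 < q * t := mul_pos hq0 ht
    have hut : q * t ≤ t := by nlinarith
    have h3 := aux_tangent (q*t) t hu hut
    have h4 := aux_endpoint t ht
    have hc : 0 ≤ Real.log (Real.cosh t) := Real.log_nonneg (Real.one_le_cosh t)
    have hsh : 0 < Real.sinh t := Real.sinh_pos_iff.2 ht
    have hshq : 0 < Real.sinh (q*t) := Real.sinh_pos_iff.2 hu
    have halg : (t - q*t) * (Real.cosh t / Real.sinh t - 1/t)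
        = (1-q) * (t * (Real.cosh t / Real.sinh t) - 1) := by
      field_simp
    have h5 : (1-q) * (t * (Real.cosh t / Real.sinh t) - 1)
        ≤ 2*q*(1-q) * Real.log (Real.cosh t) := by
      have h6 : t * (Real.cosh t / Real.sinh t) - 1 ≤ Real.log (Real.cosh t) := h4
      have h7 : Real.log (Real.cosh t) ≤ 2*q*Real.log (Real.cosh t) := by nlinarith
      nlinarith
    have hlogq : Real.log (q*t) = Real.log q + Real.log t :=
      Real.log_mul hq0.ne' ht.ne'
    have hmain : Real.log (q * Real.sinh t)
        ≤ Real.log (Real.sinh (q*t) * Real.cosh t ^ (2*q*(1-q))) := by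
      rw [Real.log_mul hq0.ne' hsh.ne', Real.log_mul hshq.ne'
        (ne_of_gt (Real.rpow_pos_of_pos (Real.cosh_pos t) _)),
        Real.log_rpow (Real.cosh_pos t)]
      rw [halg, hlogq] at h3
      linarith
    have := Real.exp_le_exp.2 hmain
    rwa [Real.exp_log (by positivity), Real.exp_log (by positivity)] at this

lemma core_div (t q : ℝ) (ht : t ≠ 0) (hq : 1/2 ≤ q) (hq1 : q ≤ 1) :
    q * (Real.sinh t / Real.sinh (q*t)) ≤ Real.cosh t ^ (2*q*(1-q)) := by
  have hq0 : 0 < q := lt_of_lt_of_le (by norm_num) hq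
  rcases lt_or_gt_of_ne ht with h | h
  · have ht' : 0 < -t := by linarith
    have := core_pos (-t) q ht' hq hq1
    rw [Real.sinh_neg, Real.cosh_neg] at this
    have hq2 : Real.sinh (q * -t) = - Real.sinh (q*t) := by
      rw [show q * -t = -(q*t) by ring, Real.sinh_neg]
    rw [hq2] at this
    have hshq : 0 < -Real.sinh (q*t) := by
      rw [neg_pos]
      exact Real.sinh_neg_iff.2 (by nlinarith)
    have hdiv : Real.sinh t / Real.sinh (q*t) = (-Real.sinh t) / (-Real.sinh (q*t)) := by
      rw [neg_div_neg_eq]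
    rw [hdiv, mul_div_assoc'] at *
    rw [div_le_iff₀ hshq]
    linarith [this]
  · have hshq : 0 < Real.sinh (q*t) := Real.sinh_pos_iff.2 (by positivity)
    have := core_pos t q h hq hq1
    rw [mul_div_assoc']
    rw [div_le_iff₀ hshq]
    linarith [this]

lemma exp_sub_one' (s : ℝ) : Real.exp (2*s) - 1 = 2 * Real.exp s * Real.sinh s := by
  rw [Real.sinh_eq, Real.exp_neg, two_mul, Real.exp_add]
  have := Real.exp_ne_zero s
  field_simp

lemma exp_add_one' (s : ℝ) : Real.exp (2*s) + 1 = 2 * Real.exp s * Real.cosh s := by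
  rw [Real.cosh_eq, Real.exp_neg, two_mul, Real.exp_add]
  have := Real.exp_ne_zero s
  field_simp

theorem hatG_ge_kantorovich_wyd (x p : ℝ) (hx : 0 < x) (hx1 : x ≠ 1)
    (hp0 : 0 < p) (hp1 : p ≤ 1 / 2) :
    p * x ^ (p / 2) * (x - 1) / (x ^ p - 1) ≥
      ((x + 1) ^ 2 / (4 * x)) ^ (-(p * (1 - p))) *
        (p * (1 - p) * (x - 1) ^ 2 / ((x ^ p - 1) * (x ^ (1 - p) - 1))) := by
  set t : ℝ := Real.log x / 2 with htdef
  have hlog : Real.log x ≠ 0 := by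
    intro h
    rcases (Real.log_eq_zero).1 h with h' | h' | h' <;> [linarith; exact hx1 h'; linarith]
  have ht : t ≠ 0 := by
    rw [htdef]; intro h; apply hlog; linarith [h]
  have hxa : ∀ a : ℝ, x ^ a = Real.exp (2 * (a * t)) := by
    intro a
    rw [Real.rpow_def_of_pos hx]
    congr 1
    rw [htdef]; ring
  have hxe : x = Real.exp (2 * t) := by
    have := hxa 1
    rwa [Real.rpow_one, one_mul] at this
  have e1 : x ^ p - 1 = 2 * Real.exp (p*t) * Real.sinh (p*t) := by
    rw [hxa p, exp_sub_one']
  have e2 : x ^ (1-p) - 1 = 2 * Real.exp ((1-p)*t) * Real.sinh ((1-p)*t) := by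
    rw [hxa (1-p), exp_sub_one']
  have e3 : x - 1 = 2 * Real.exp t * Real.sinh t := by
    rw [hxe]
    have := exp_sub_one' t
    linarith [this]
  have e4 : x ^ (p/2) = Real.exp (p*t) := by
    rw [hxa (p/2)]
    congr 1
    ring
  have e5 : x + 1 = 2 * Real.exp t * Real.cosh t := by
    rw [hxe]
    have := exp_add_one' t
    linarith [this]
  have sinh_pt_ne : Real.sinh (p*t) ≠ 0 := Real.sinh_ne_zero.2 (mul_ne_zero hp0.ne' ht)
  have sinh_qt_ne : Real.sinh ((1-p)*t) ≠ 0 :=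
    Real.sinh_ne_zero.2 (mul_ne_zero (by intro h; linarith) ht)
  have sinh_t_ne : Real.sinh t ≠ 0 := Real.sinh_ne_zero.2 ht
  have expne : ∀ s : ℝ, Real.exp s ≠ 0 := Real.exp_ne_zero
  -- reduce LHS
  have Lred : p * x ^ (p / 2) * (x - 1) / (x ^ p - 1)
      = p * Real.exp t * (Real.sinh t / Real.sinh (p*t)) := by
    rw [e4, e3, e1]
    field_simp
  -- Kantorovich part
  have eK : (x + 1) ^ 2 / (4 * x) = Real.cosh t ^ (2:ℕ) := by
    rw [e5, hxe, show (2:ℝ)*t = t + t by ring, Real.exp_add]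
    field_simp
    ring
  have eKpow : ((x + 1) ^ 2 / (4 * x)) ^ (-(p * (1 - p)))
      = Real.cosh t ^ (-(2*p*(1-p))) := by
    rw [eK, ← Real.rpow_natCast (Real.cosh t) 2, ← Real.rpow_mul (Real.cosh_pos t).le]
    congr 1
    push_cast
    ring
  have Rred : ((x + 1) ^ 2 / (4 * x)) ^ (-(p * (1 - p))) *
        (p * (1 - p) * (x - 1) ^ 2 / ((x ^ p - 1) * (x ^ (1 - p) - 1)))
      = Real.cosh t ^ (-(2*p*(1-p))) *
        ((p * Real.exp t * (Real.sinh t / Real.sinh (p*t))) *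
          ((1-p) * (Real.sinh t / Real.sinh ((1-p)*t)))) := by
    rw [eKpow, e3, e1, e2,
      show Real.exp t = Real.exp (p*t) * Real.exp ((1-p)*t) by
        rw [← Real.exp_add]; congr 1; ring]
    field_simp
  rw [ge_iff_le, Lred, Rred]
  -- positivity of the common factor
  have hA : 0 < p * Real.exp t * (Real.sinh t / Real.sinh (p*t)) := by
    rcases lt_or_gt_of_ne ht with h | h
    · have h1 : Real.sinh t < 0 := Real.sinh_neg_iff.2 h
      have h2 : Real.sinh (p*t) < 0 := Real.sinh_neg_iff.2 (by nlinarith)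
      have : 0 < Real.sinh t / Real.sinh (p*t) := div_pos_of_neg_of_neg h1 h2
      exact mul_pos (mul_pos hp0 (Real.exp_pos t)) this
    · have h1 : 0 < Real.sinh t := Real.sinh_pos_iff.2 h
      have h2 : 0 < Real.sinh (p*t) := Real.sinh_pos_iff.2 (by positivity)
      have : 0 < Real.sinh t / Real.sinh (p*t) := div_pos h1 h2
      exact mul_pos (mul_pos hp0 (Real.exp_pos t)) this
  -- the core inequality
  have hcore : (1-p) * (Real.sinh t / Real.sinh ((1-p)*t))
      ≤ Real.cosh t ^ (2*p*(1-p)) := by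
    have := core_div t (1-p) ht (by linarith) (by linarith)
    rw [show 2*(1-p)*(1-(1-p)) = 2*p*(1-p) by ring] at this
    exact this
  have hrpos : 0 < Real.cosh t ^ (2*p*(1-p)) :=
    Real.rpow_pos_of_pos (Real.cosh_pos t) _
  have hrneg : Real.cosh t ^ (-(2*p*(1-p))) = (Real.cosh t ^ (2*p*(1-p)))⁻¹ :=
    Real.rpow_neg (Real.cosh_pos t).le _
  have hfrac : 0 ≤ (1-p) * (Real.sinh t / Real.sinh ((1-p)*t)) := by
    rcases lt_or_gt_of_ne ht with h | h
    · have h1 : Real.sinh t < 0 := Real.sinh_neg_iff.2 h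
      have h2 : Real.sinh ((1-p)*t) < 0 := Real.sinh_neg_iff.2 (by nlinarith)
      have : 0 < Real.sinh t / Real.sinh ((1-p)*t) := div_pos_of_neg_of_neg h1 h2
      exact mul_nonneg (by linarith) this.le
    · have h1 : 0 < Real.sinh t := Real.sinh_pos_iff.2 h
      have h2 : 0 < Real.sinh ((1-p)*t) := Real.sinh_pos_iff.2 (by nlinarith)
      have : 0 < Real.sinh t / Real.sinh ((1-p)*t) := div_pos h1 h2
      exact mul_nonneg (by linarith) this.le
  have hsmall : (1-p) * (Real.sinh t / Real.sinh ((1-p)*t))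
      * (Real.cosh t ^ (2*p*(1-p)))⁻¹ ≤ 1 := by
    rw [← div_eq_mul_inv, div_le_one hrpos]
    exact hcore
  calc Real.cosh t ^ (-(2*p*(1-p))) *
        ((p * Real.exp t * (Real.sinh t / Real.sinh (p*t))) *
          ((1-p) * (Real.sinh t / Real.sinh ((1-p)*t))))
      = (p * Real.exp t * (Real.sinh t / Real.sinh (p*t))) *
        ((1-p) * (Real.sinh t / Real.sinh ((1-p)*t))
          * (Real.cosh t ^ (2*p*(1-p)))⁻¹) := by rw [hrneg]; ring
    _ ≤ (p * Real.exp t * (Real.sinh t / Real.sinh (p*t))) * 1 :=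
        mul_le_mul_of_nonneg_left hsmall hA.le
    _ = p * Real.exp t * (Real.sinh t / Real.sinh (p*t)) := mul_one _
end

section
/- For every real x > 0 with x ≠ 1 and every real p with p < 0 or p > 1, one has Ĝ_p(x,1) ≤ K(x)^{-p(1-p)} · W_p(x,1), where K is the Kantorovich constant. -/
open Real

private lemma nonneg_of_deriv_s14 (f f' : ℝ → ℝ) (hf : ∀ x, HasDerivAt f (f' x) x)
    (h0 : f 0 = 0) (hf' : ∀ x, 0 ≤ x → 0 ≤ f' x) {s : ℝ} (hs : 0 ≤ s) : 0 ≤ f s := by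
  have hm : MonotoneOn f (Set.Ici 0) := by
    apply monotoneOn_of_deriv_nonneg (convex_Ici 0)
    · exact fun x _ => (hf x).continuousAt.continuousWithinAt
    · exact fun x _ => (hf x).differentiableAt.differentiableWithinAt
    · intro x hx
      rw [(hf x).deriv]
      exact hf' x (le_of_lt (by simpa using hx))
  have h := hm Set.self_mem_Ici (Set.mem_Ici.2 hs) hs
  rw [h0] at h
  exact h

private lemma sinh_le_mul_cosh_s14 {s : ℝ} (hs : 0 ≤ s) : sinh s ≤ s * cosh s := by
  have h := nonneg_of_deriv_s14 (fun s => s * cosh s - sinh s) (fun s => s * sinh s)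
    (fun x => by
      have h := ((hasDerivAt_id x).mul (Real.hasDerivAt_cosh x)).sub (Real.hasDerivAt_sinh x)
      refine h.congr_deriv (Eq.symm ?_)
      simp [id_eq])
    (by simp) (fun x hx => mul_nonneg hx (Real.sinh_nonneg_iff.2 hx)) hs
  simpa using h

private lemma one_add_sq_half_le_cosh {s : ℝ} (hs : 0 ≤ s) : 1 + s^2/2 ≤ cosh s := by
  have h := nonneg_of_deriv_s14 (fun s => cosh s - (1 + s^2/2)) (fun s => sinh s - s)
    (fun x => by
      have h := (Real.hasDerivAt_cosh x).sub (((hasDerivAt_pow 2 x).div_const 2).const_add 1)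
      refine h.congr_deriv (Eq.symm ?_)
      simp)
    (by simp) (fun x hx => by
      show 0 ≤ sinh x - x
      linarith [Real.self_le_sinh_iff.2 hx]) hs
  simpa using h

private lemma log_cosh_ge {s : ℝ} (hs : 0 ≤ s) :
    s * sinh s / (2 * cosh s) ≤ log (cosh s) := by
  have h := nonneg_of_deriv_s14 (fun s => log (cosh s) - s * sinh s / (2 * cosh s))
    (fun s => (sinh s * cosh s - s) / (2 * (cosh s)^2))
    (fun x => by
      have hc := Real.cosh_pos x
      have h1 : HasDerivAt (fun x : ℝ => log (cosh x)) (sinh x / cosh x) x :=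
        (Real.hasDerivAt_cosh x).log hc.ne'
      have h2 : HasDerivAt (fun x : ℝ => x * sinh x / (2 * cosh x))
          (((1 * sinh x + x * cosh x) * (2 * cosh x) - x * sinh x * (2 * sinh x)) / (2 * cosh x)^2) x :=
        ((hasDerivAt_id x).mul (Real.hasDerivAt_sinh x)).div
          ((Real.hasDerivAt_cosh x).const_mul 2) (by positivity)
      have h := h1.sub h2
      refine h.congr_deriv (Eq.symm ?_)
      have hid : Real.cosh x ^ 2 - Real.sinh x ^ 2 = 1 := Real.cosh_sq_sub_sinh_sq x
      field_simp
      linear_combination x * hid)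
    (by simp) (fun x hx => by
      show 0 ≤ (sinh x * cosh x - x) / (2 * (cosh x)^2)
      apply div_nonneg _ (by positivity)
      nlinarith [Real.self_le_sinh_iff.2 hx, Real.one_le_cosh x, Real.sinh_nonneg_iff.2 hx]) hs
  simpa using h

private lemma self_mul_cosh_le {s : ℝ} (hs : 0 ≤ s) :
    s * cosh s ≤ sinh s * (1 + 2 * log (cosh s)) := by
  have h := nonneg_of_deriv_s14 (fun s => sinh s * (1 + 2 * log (cosh s)) - s * cosh s)
    (fun s => 2 * cosh s * log (cosh s) + 2 * (sinh s)^2 / cosh s - s * sinh s)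
    (fun x => by
      have hc := Real.cosh_pos x
      have h1 : HasDerivAt (fun x : ℝ => sinh x * (1 + 2 * log (cosh x)))
          (cosh x * (1 + 2 * log (cosh x)) + sinh x * (2 * (sinh x / cosh x))) x :=
        (Real.hasDerivAt_sinh x).mul
          ((((Real.hasDerivAt_cosh x).log hc.ne').const_mul 2).const_add 1)
      have h2 : HasDerivAt (fun x : ℝ => x * cosh x) (1 * cosh x + x * sinh x) x :=
        (hasDerivAt_id x).mul (Real.hasDerivAt_cosh x)
      have h := h1.sub h2
      refine h.congr_deriv (Eq.symm ?_)
      field_simp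
      ring)
    (by simp) (fun x hx => by
      show 0 ≤ 2 * cosh x * log (cosh x) + 2 * (sinh x)^2 / cosh x - x * sinh x
      have hc := Real.cosh_pos x
      have hd := log_cosh_ge hx
      have h1 : x * sinh x ≤ 2 * cosh x * log (cosh x) := by
        rw [div_le_iff₀ (by positivity)] at hd
        nlinarith [hd]
      have h2 : 0 ≤ 2 * (sinh x)^2 / cosh x := by positivity
      linarith) hs
  simpa using h

private lemma coth_upper {y : ℝ} (hy : 0 ≤ y) : 3 * (y * cosh y) ≤ (3 + y^2) * sinh y := by
  have h := nonneg_of_deriv_s14 (fun y => (3 + y^2) * sinh y - 3 * (y * cosh y))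
    (fun y => y * (y * cosh y - sinh y))
    (fun x => by
      have h := ((((hasDerivAt_pow 2 x).const_add 3)).mul (Real.hasDerivAt_sinh x)).sub
        (((hasDerivAt_id x).mul (Real.hasDerivAt_cosh x)).const_mul 3)
      refine h.congr_deriv (Eq.symm ?_)
      simp [id_eq]
      ring)
    (by simp) (fun x hx => mul_nonneg hx (by linarith [sinh_le_mul_cosh_s14 hx])) hy
  simpa using h

private lemma sinh_mul_le_s14 {t s : ℝ} (ht0 : 0 ≤ t) (ht1 : t ≤ 1) (hs : 0 ≤ s) :
    sinh (t * s) ≤ t * sinh s := by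
  have h := nonneg_of_deriv_s14 (fun s => t * sinh s - sinh (t * s))
    (fun s => t * cosh s - cosh (t * s) * t)
    (fun x => by
      have h1 : HasDerivAt (fun x : ℝ => sinh (t * x)) (cosh (t * x) * t) x :=
        (((hasDerivAt_id x).const_mul t).sinh).congr_deriv (by simp)
      exact ((Real.hasDerivAt_sinh x).const_mul t).sub h1)
    (by simp) (fun x hx => by
      show 0 ≤ t * cosh x - cosh (t * x) * t
      have hc : cosh (t * x) ≤ cosh x := by
        rw [Real.cosh_le_cosh]
        rw [abs_of_nonneg hx, abs_of_nonneg (mul_nonneg ht0 hx)]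
        nlinarith
      nlinarith) hs
  simpa using h

set_option maxHeartbeats 1000000 in
private lemma key_ineq {s t : ℝ} (hs : 0 < s) (ht : 1 ≤ t) :
    s * cosh (t * s) / sinh (t * s) ≤ 1 / t + 2 * t * log (cosh s) := by
  have ht0 : 0 < t := lt_of_lt_of_le one_pos ht
  have hts : 0 < t * s := mul_pos ht0 hs
  have hsts : s ≤ t * s := le_mul_of_one_le_left hs.le ht
  have hA : 0 < sinh (t * s) := Real.sinh_pos_iff.mpr hts
  have hS : 0 < sinh s := Real.sinh_pos_iff.mpr hs
  have hC := Real.cosh_pos s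
  have hCt := Real.cosh_pos (t * s)
  set L := log (cosh s) with hLdef
  have hL0 : 0 ≤ L := Real.log_nonneg (Real.one_le_cosh s)
  have hinv : t * (1 / t) = 1 := mul_one_div_cancel ht0.ne'
  rcases le_or_gt 1 (2 * L) with hcase | hcase
  · -- route B, 2L ≥ 1
    have hmono : cosh (t * s) * sinh s ≤ sinh (t * s) * cosh s := by
      have h := Real.sinh_nonneg_iff.mpr (by linarith : (0:ℝ) ≤ t * s - s)
      rw [Real.sinh_sub] at h
      linarith
    have h1 : s * cosh (t * s) / sinh (t * s) ≤ s * cosh s / sinh s := by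
      rw [div_le_div_iff₀ hA hS]
      nlinarith [hmono]
    have h2 : s * cosh s / sinh s ≤ 1 + 2 * L := by
      rw [div_le_iff₀ hS]
      have h := self_mul_cosh_le hs.le
      nlinarith [h]
    have h3 : 1 + 2 * L ≤ 1 / t + 2 * t * L := by
      have h1t : 1 / t ≤ 1 := by
        rw [div_le_one ht0]; exact ht
      nlinarith [mul_nonneg (sub_nonneg.2 ht) (sub_nonneg.2 (le_trans h1t hcase))]
    linarith
  · -- route A, 2L < 1
    have hF := coth_upper hts.le
    have h1 : s * cosh (t * s) / sinh (t * s) ≤ 1 / t + t * s^2 / 3 := by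
      rw [div_le_iff₀ hA, show 1 / t + t * s^2 / 3 = (3 + (t*s)^2) / (3*t) from by
        field_simp]
      rw [div_mul_eq_mul_div, le_div_iff₀ (by positivity : (0:ℝ) < 3*t)]
      nlinarith [hF]
    have hs2 : s^2 ≤ 6 * L := by
      have hclt : cosh s < exp (1/2) := by
        have hL12 : L < 1/2 := by linarith
        calc cosh s = exp L := (Real.exp_log hC).symm
        _ < exp (1/2) := Real.exp_lt_exp.mpr hL12
      have he2 : exp (1/2) * exp (1/2) = exp 1 := by rw [← Real.exp_add]; norm_num
      have he : exp (1/2) < 1.649 := by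
        nlinarith [Real.exp_one_lt_d9, Real.exp_pos (1/2 : ℝ)]
      have hq := one_add_sq_half_le_cosh hs.le
      have hslt : s^2 < 1.3 := by nlinarith
      set y := s^2/6 with hydef
      have hy0 : 0 ≤ y := by positivity
      have hylt : y < 0.22 := by rw [hydef]; nlinarith
      have hexp1 : exp y * (1 - y) ≤ 1 := by
        have := Real.add_one_le_exp (-y)
        have h2 : exp (-y) = 1 / exp y := by rw [Real.exp_neg]; ring
        rw [h2] at this
        have hep := Real.exp_pos y
        rw [le_div_iff₀ hep] at this
        nlinarith
      have hexp2 : exp y ≤ 1 + 3 * y := by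
        have h1y : (0:ℝ) < 1 - y := by linarith
        have hcc : exp y * (1 - y) ≤ (1 + 3*y) * (1 - y) := by
          nlinarith [mul_nonneg hy0 (by linarith : (0:ℝ) ≤ 2 - 3*y)]
        exact le_of_mul_le_mul_right hcc h1y
      have hexp3 : exp y ≤ cosh s := by
        calc exp y ≤ 1 + 3 * y := hexp2
        _ = 1 + s^2/2 := by rw [hydef]; ring
        _ ≤ cosh s := hq
      have := (Real.le_log_iff_exp_le hC).mpr hexp3
      rw [← hLdef] at this
      nlinarith
    have h2 : t * s^2 / 3 ≤ 2 * t * L := by nlinarith [mul_le_mul_of_nonneg_left hs2 ht0.le]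
    linarith

private lemma main_ineq {s t : ℝ} (hs : 0 < s) (ht : 1 ≤ t) :
    sinh (t * s) ≤ cosh s ^ (t^2 - 1) * (t * sinh s) := by
  have hS : 0 < sinh s := Real.sinh_pos_iff.mpr hs
  have hC := Real.cosh_pos s
  have ht0 : 0 < t := lt_of_lt_of_le one_pos ht
  have hts : 0 < sinh (t * s) := Real.sinh_pos_iff.mpr (mul_pos ht0 hs)
  set L := log (cosh s) with hLdef
  set F : ℝ → ℝ := fun u => log (sinh (u * s)) - log u - log (sinh s) - (u^2 - 1) * L
    with hFdef
  have hder : ∀ u, 1 ≤ u →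
      HasDerivAt F (s * cosh (u * s) / sinh (u * s) - 1/u - 2 * u * L) u := by
    intro u hu
    have hu0 : 0 < u := lt_of_lt_of_le one_pos hu
    have hus : 0 < sinh (u * s) := Real.sinh_pos_iff.mpr (mul_pos hu0 hs)
    have h1 : HasDerivAt (fun u : ℝ => log (sinh (u * s)))
        (cosh (u * s) * s / sinh (u * s)) u := by
      have h := (((hasDerivAt_id u).mul_const s).sinh).log hus.ne'
      simpa using h
    have h2 : HasDerivAt (fun u : ℝ => log u) (1/u) u := by
      simpa [one_div] using Real.hasDerivAt_log hu0.ne'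
    have h3 : HasDerivAt (fun u : ℝ => (u^2 - 1) * L) (2 * u * L) u := by
      have h := ((hasDerivAt_pow 2 u).sub_const 1).mul_const L
      refine h.congr_deriv (Eq.symm ?_)
      simp
    have h := ((h1.sub h2).sub_const (log (sinh s))).sub h3
    refine h.congr_deriv (Eq.symm ?_)
    ring
  have hanti : AntitoneOn F (Set.Ici 1) := by
    apply antitoneOn_of_deriv_nonpos (convex_Ici 1)
    · intro u hu
      exact (hder u hu).continuousAt.continuousWithinAt
    · intro u hu
      rw [interior_Ici] at hu
      exact (hder u (le_of_lt hu)).differentiableAt.differentiableWithinAt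
    · intro u hu
      rw [interior_Ici] at hu
      have hu1 : 1 ≤ u := le_of_lt hu
      rw [(hder u hu1).deriv]
      have hk := key_ineq hs hu1
      linarith
  have hF1 : F 1 = 0 := by simp [hFdef]
  have hFt : F t ≤ 0 := by
    have h := hanti (Set.mem_Ici.2 le_rfl) (Set.mem_Ici.2 ht) ht
    rw [hF1] at h
    exact h
  have hpos : 0 < cosh s ^ (t^2 - 1) * (t * sinh s) := by positivity
  have hlog : log (sinh (t * s)) ≤ log (cosh s ^ (t^2 - 1) * (t * sinh s)) := by
    rw [Real.log_mul (by positivity) (by positivity), Real.log_rpow hC,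
      Real.log_mul ht0.ne' hS.ne']
    have : F t = log (sinh (t * s)) - log t - log (sinh s) - (t^2 - 1) * L := rfl
    rw [this] at hFt
    linarith
  calc sinh (t * s) = exp (log (sinh (t * s))) := (Real.exp_log hts).symm
  _ ≤ exp (log (cosh s ^ (t^2 - 1) * (t * sinh s))) := Real.exp_le_exp.mpr hlog
  _ = cosh s ^ (t^2 - 1) * (t * sinh s) := Real.exp_log hpos

private lemma core_ineq_s14 {s t E : ℝ} (hs : 0 < s) (ht : 0 < t) (hE0 : 0 ≤ E)
    (hE : 1 ≤ t → t^2 - 1 ≤ E) : sinh (t * s) ≤ cosh s ^ E * (t * sinh s) := by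
  have hS : 0 < sinh s := Real.sinh_pos_iff.mpr hs
  have hC := Real.cosh_pos s
  have htS : 0 < t * sinh s := mul_pos ht hS
  rcases le_or_gt t 1 with h | h
  · have h1 := sinh_mul_le_s14 ht.le h hs.le
    have h2 : (1:ℝ) ≤ cosh s ^ E := by
      calc (1:ℝ) = cosh s ^ (0:ℝ) := (Real.rpow_zero _).symm
      _ ≤ cosh s ^ E := Real.rpow_le_rpow_of_exponent_le (Real.one_le_cosh s) hE0
    nlinarith
  · have h1 := main_ineq hs h.le
    have h2 : cosh s ^ (t^2 - 1) ≤ cosh s ^ E :=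
      Real.rpow_le_rpow_of_exponent_le (Real.one_le_cosh s) (hE h.le)
    nlinarith

private lemma key2 {s p : ℝ} (hs : s ≠ 0) (hp : p < 0 ∨ 1 < p) :
    p * sinh s / sinh (p * s) ≤
      cosh s ^ (2 * (p * (p - 1))) *
        (p * (1 - p) * (sinh s)^2 / (sinh (p * s) * sinh ((1 - p) * s))) := by
  wlog hs0 : 0 < s generalizing s
  · have hneg : 0 < -s := by
      rcases lt_or_gt_of_ne hs with h | h
      · linarith
      · exact absurd h (by simpa using hs0)
    have h := this (by simpa using hneg.ne') hneg
    rw [show p * -s = -(p * s) by ring, show (1 - p) * -s = -((1 - p) * s) by ring] at h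
    simpa [Real.sinh_neg, Real.cosh_neg, neg_div_neg_eq, neg_mul_neg, neg_sq] using h
  · have hS : 0 < sinh s := Real.sinh_pos_iff.mpr hs0
    have hC := Real.cosh_pos s
    set C := cosh s ^ (2 * (p * (p - 1))) with hCdef
    have hCpos : 0 < C := Real.rpow_pos_of_pos hC _
    have hE0 : 0 ≤ 2 * (p * (p - 1)) := by rcases hp with h | h <;> nlinarith
    -- nonvanishing
    have hp0 : p ≠ 0 := by rcases hp with h | h <;> intro hc <;> simp [hc] at h <;> linarith
    have hp1 : p ≠ 1 := by rcases hp with h | h <;> intro hc <;> rw [hc] at h <;> linarith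
    have hA : sinh (p * s) ≠ 0 := by
      intro hc
      have := Real.sinh_eq_zero.mp hc
      exact (mul_ne_zero hp0 hs) this
    have hB : sinh ((1 - p) * s) ≠ 0 := by
      intro hc
      have := Real.sinh_eq_zero.mp hc
      exact (mul_ne_zero (sub_ne_zero.mpr (Ne.symm hp1)) hs) this
    -- positive first factor
    have hfac1 : 0 < p * sinh s / sinh (p * s) := by
      rcases hp with h | h
      · have hps : sinh (p * s) < 0 := Real.sinh_neg_iff.mpr (by nlinarith)
        exact div_pos_of_neg_of_neg (by nlinarith) hps
      · have hps : 0 < sinh (p * s) := Real.sinh_pos_iff.mpr (by nlinarith)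
        exact div_pos (by nlinarith) hps
    -- nonneg second factor
    have hfac2 : 0 ≤ (C * ((1 - p) * sinh s) - sinh ((1 - p) * s)) / sinh ((1 - p) * s) := by
      rcases hp with h | h
      · -- p < 0 : t = 1 - p > 1
        have ht : (1:ℝ) < 1 - p := by linarith
        have hcore := core_ineq_s14 hs0 (by linarith : (0:ℝ) < 1 - p) hE0
          (fun _ => by nlinarith : 1 ≤ 1 - p → (1 - p)^2 - 1 ≤ 2 * (p * (p - 1)))
        have hBpos : 0 < sinh ((1 - p) * s) := Real.sinh_pos_iff.mpr (by nlinarith)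
        apply div_nonneg _ hBpos.le
        rw [← hCdef] at hcore
        linarith
      · -- 1 < p : t = p - 1 > 0, (1-p) * s = -((p-1) * s)
        have hcore := core_ineq_s14 hs0 (by linarith : (0:ℝ) < p - 1) hE0
          (fun _ => by nlinarith : 1 ≤ p - 1 → (p - 1)^2 - 1 ≤ 2 * (p * (p - 1)))
        rw [← hCdef] at hcore
        have hrw : sinh ((1 - p) * s) = -sinh ((p - 1) * s) := by
          rw [show (1 - p) * s = -((p - 1) * s) by ring, Real.sinh_neg]
        have hBneg : 0 < sinh ((p - 1) * s) := Real.sinh_pos_iff.mpr (by nlinarith)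
        rw [hrw]
        apply div_nonneg_of_nonpos (by nlinarith) (by linarith)
    have heq : C * (p * (1 - p) * (sinh s)^2 / (sinh (p * s) * sinh ((1 - p) * s)))
        - p * sinh s / sinh (p * s)
        = (p * sinh s / sinh (p * s)) *
          ((C * ((1 - p) * sinh s) - sinh ((1 - p) * s)) / sinh ((1 - p) * s)) := by
      field_simp
    nlinarith [mul_nonneg hfac1.le hfac2, heq]

private lemma exp_two_sub_one (y : ℝ) : exp (2 * y) - 1 = exp y * (2 * sinh y) := by
  rw [Real.sinh_eq]
  have h1 : exp y * exp y = exp (2 * y) := by rw [← Real.exp_add]; ring_nf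
  have h2 : exp y * exp (-y) = 1 := by rw [← Real.exp_add]; simp
  field_simp
  linarith

private lemma exp_two_add_one (y : ℝ) : exp (2 * y) + 1 = exp y * (2 * cosh y) := by
  rw [Real.cosh_eq]
  have h1 : exp y * exp y = exp (2 * y) := by rw [← Real.exp_add]; ring_nf
  have h2 : exp y * exp (-y) = 1 := by rw [← Real.exp_add]; simp
  field_simp
  linarith

theorem hatG_le_kantorovich_wyd (x p : ℝ) (hx : 0 < x) (hx1 : x ≠ 1)
    (hp : p < 0 ∨ 1 < p) :
    p * x ^ (p / 2) * (x - 1) / (x ^ p - 1) ≤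
      ((x + 1) ^ 2 / (4 * x)) ^ (-(p * (1 - p))) *
        (p * (1 - p) * (x - 1) ^ 2 / ((x ^ p - 1) * (x ^ (1 - p) - 1))) := by
  set s := log x / 2 with hsdef
  have hlogx : log x ≠ 0 := by
    intro h
    rcases Real.log_eq_zero.mp h with h | h | h
    · exact hx.ne' h
    · exact hx1 h
    · linarith
  have hs : s ≠ 0 := by
    rw [hsdef]
    intro h
    apply hlogx
    linarith [h]
  have hlog : log x = 2 * s := by rw [hsdef]; ring
  have hp0 : p ≠ 0 := by rcases hp with h | h <;> intro hc <;> rw [hc] at h <;> norm_num at h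
  have hp1 : (1:ℝ) - p ≠ 0 := by rcases hp with h | h <;> intro hc <;> nlinarith
  have hA : sinh (p * s) ≠ 0 := fun hc => (mul_ne_zero hp0 hs) (Real.sinh_eq_zero.mp hc)
  have hB : sinh ((1 - p) * s) ≠ 0 := fun hc => (mul_ne_zero hp1 hs) (Real.sinh_eq_zero.mp hc)
  have hC := Real.cosh_pos s
  have hX : x = exp (2 * s) := by rw [← Real.exp_log hx, hlog]
  have hXp : x ^ p = exp (2 * (p * s)) := by
    rw [Real.rpow_def_of_pos hx, hlog]; congr 1; ring
  have hXq : x ^ (1 - p) = exp (2 * ((1 - p) * s)) := by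
    rw [Real.rpow_def_of_pos hx, hlog]; congr 1; ring
  have hXhalf : x ^ (p / 2) = exp (p * s) := by
    rw [Real.rpow_def_of_pos hx, hlog]; congr 1; ring
  have hx1' : x - 1 = exp s * (2 * sinh s) := by rw [hX]; exact exp_two_sub_one s
  have hxp1 : x ^ p - 1 = exp (p * s) * (2 * sinh (p * s)) := by
    rw [hXp]; exact exp_two_sub_one (p * s)
  have hxq1 : x ^ (1 - p) - 1 = exp ((1 - p) * s) * (2 * sinh ((1 - p) * s)) := by
    rw [hXq]; exact exp_two_sub_one ((1 - p) * s)
  have he2 : exp s * exp s = exp (2 * s) := by rw [← Real.exp_add]; ring_nf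
  have hK : (x + 1) ^ 2 / (4 * x) = cosh s ^ 2 := by
    rw [hX, exp_two_add_one]
    field_simp
    linear_combination 4 * he2
  have hKpow : ((x + 1) ^ 2 / (4 * x)) ^ (-(p * (1 - p)))
      = cosh s ^ (2 * (p * (p - 1))) := by
    rw [hK, ← Real.rpow_natCast (cosh s) 2, ← Real.rpow_mul hC.le]
    congr 1
    push_cast
    ring
  have hE1 : p * x ^ (p / 2) * (x - 1) / (x ^ p - 1)
      = exp s * (p * sinh s / sinh (p * s)) := by
    rw [hXhalf, hx1', hxp1]
    field_simp
  have hsplit : exp (p * s) * exp ((1 - p) * s) = exp s := by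
    rw [← Real.exp_add]; congr 1; ring
  have hE3 : p * (1 - p) * (x - 1) ^ 2 / ((x ^ p - 1) * (x ^ (1 - p) - 1))
      = exp s * (p * (1 - p) * (sinh s) ^ 2 / (sinh (p * s) * sinh ((1 - p) * s))) := by
    rw [hx1', hxp1, hxq1]
    have hden : (exp (p * s) * (2 * sinh (p * s))) * (exp ((1 - p) * s) * (2 * sinh ((1 - p) * s)))
        = 4 * exp s * (sinh (p * s) * sinh ((1 - p) * s)) := by
      rw [← hsplit]; ring
    rw [hden]
    field_simp
    ring
  rw [hE1, hKpow, hE3]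
  have hk := key2 hs hp
  calc exp s * (p * sinh s / sinh (p * s))
      ≤ exp s * (cosh s ^ (2 * (p * (p - 1))) *
        (p * (1 - p) * (sinh s) ^ 2 / (sinh (p * s) * sinh ((1 - p) * s)))) :=
        mul_le_mul_of_nonneg_left hk (Real.exp_pos s).le
  _ = cosh s ^ (2 * (p * (p - 1))) *
        (exp s * (p * (1 - p) * (sinh s) ^ 2 / (sinh (p * s) * sinh ((1 - p) * s)))) := by
        ring
end
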